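/- arXiv:1806.06141 — 7 statements merged into one kernel-verified Lean document; each statement's English description precedes it below -/
import Mathlib

section
/- Let T, S be bounded operators on a complex Hilbert space H and let S = V|S| be the polar decomposition of S. Then | |T|·|S^*| | = V |TS| V^* and V |TS| = | |T|·|S^*| | V. -/
open ContinuousLinearMap

variable {H : Type*} [NormedAddCommGroup H] [InnerProductSpace ℂ H] [CompleteSpace H]

/-- The absolute value `|T| = (T^*T)^(1/2)` of a bounded operator on a complex
Hilbert space, defined via the continuous functional calculus. -/
noncomputable def absOp (T : H →L[ℂ] H) : H →L[ℂ] H :=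
  cfc Real.sqrt (adjoint T * T)

/-- The orthogonal projection of `H` onto the closure of the range of `T`,
regarded as an operator on `H`. -/
noncomputable def rangeProjOp (T : H →L[ℂ] H) : H →L[ℂ] H :=
  (LinearMap.range (T : H →ₗ[ℂ] H)).topologicalClosure.subtypeL ∘L
    Submodule.orthogonalProjectionOnto (LinearMap.range (T : H →ₗ[ℂ] H)).topologicalClosure

/-- `U` is a partial isometry: `U^*U` is an orthogonal projection
(a self-adjoint idempotent). -/
def IsPartialIsometryOp (U : H →L[ℂ] H) : Prop :=
  IsSelfAdjoint (adjoint U * U) ∧ (adjoint U * U) * (adjoint U * U) = adjoint U * U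

/-- `T = U|T|` is the polar decomposition of `T`: `U` is a partial isometry and
`U^*U` is the orthogonal projection onto the closure of the range of `T^*`. -/
def IsPolarDecompositionOp (T U : H →L[ℂ] H) : Prop :=
  T = U * absOp T ∧ IsPartialIsometryOp U ∧ adjoint U * U = rangeProjOp (adjoint T)

/-- `cfc Real.sqrt` of anything is nonnegative. -/
lemma cfc_sqrt_nonneg (a : H →L[ℂ] H) : 0 ≤ cfc Real.sqrt a :=
  cfc_nonneg fun x _ => Real.sqrt_nonneg x

/-- The square of `cfc Real.sqrt a` recovers a nonnegative `a`. -/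
lemma cfc_sqrt_mul_self {a : H →L[ℂ] H} (ha : 0 ≤ a) :
    cfc Real.sqrt a * cfc Real.sqrt a = a := by
  rw [← cfc_mul Real.sqrt Real.sqrt a]
  have h2 : cfc (fun x : ℝ => Real.sqrt x * Real.sqrt x) a = cfc (fun x : ℝ => x) a :=
    cfc_congr fun x hx => Real.mul_self_sqrt (spectrum_nonneg_of_nonneg ha hx)
  rw [h2, cfc_id' ℝ a]

/-- Uniqueness of nonnegative square roots, phrased via `cfc Real.sqrt`. -/
lemma cfc_sqrt_unique {a b : H →L[ℂ] H} (hb : 0 ≤ b) (h : b * b = a) :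
    cfc Real.sqrt a = b := by
  subst h
  have hb' : IsSelfAdjoint b := .of_nonneg hb
  have h1 : cfc (fun x : ℝ => x * x) b = b * b := by
    rw [cfc_mul (fun x : ℝ => x) (fun x : ℝ => x) b, cfc_id' ℝ b]
  rw [← h1, ← cfc_comp Real.sqrt (fun x : ℝ => x * x) b]
  have h2 : cfc (Real.sqrt ∘ fun x : ℝ => x * x) b = cfc (fun x : ℝ => x) b :=
    cfc_congr fun x hx => Real.sqrt_mul_self (spectrum_nonneg_of_nonneg hb hx)
  rw [h2, cfc_id' ℝ b]

lemma absOp_nonneg (T : H →L[ℂ] H) : 0 ≤ absOp T := cfc_sqrt_nonneg _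

lemma absOp_isSelfAdjoint (T : H →L[ℂ] H) : IsSelfAdjoint (absOp T) :=
  .of_nonneg (absOp_nonneg T)

lemma absOp_mul_self (T : H →L[ℂ] H) : absOp T * absOp T = star T * T := by
  rw [absOp, ← star_eq_adjoint]
  exact cfc_sqrt_mul_self (star_mul_self_nonneg T)

lemma absOp_eq_of_sq {T b : H →L[ℂ] H} (hb : 0 ≤ b) (h : b * b = star T * T) :
    absOp T = b := by
  rw [absOp, ← star_eq_adjoint]
  exact cfc_sqrt_unique hb h

/-- If `q` is a self-adjoint idempotent, `b` self-adjoint, and `b * q * b = 0`,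
then `q * b = 0`. -/
lemma proj_mul_eq_zero {q b : H →L[ℂ] H} (hq : IsSelfAdjoint q)
    (hqq : q * q = q) (hb : IsSelfAdjoint b) (h : b * q * b = 0) :
    q * b = 0 := by
  refine (CStarRing.star_mul_self_eq_zero_iff _).mp ?_
  rw [star_mul, hb.star_eq, hq.star_eq]
  calc b * q * (q * b) = b * (q * q) * b := by noncomm_ring
  _ = b * q * b := by rw [hqq]
  _ = 0 := h

/-- If `q` is a self-adjoint idempotent, and `q * (b * b) * q = 0`,
then `b * q = 0`. -/
lemma mul_proj_eq_zero {q b : H →L[ℂ] H} (hq : IsSelfAdjoint q)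
    (hb : IsSelfAdjoint b) (h : q * (b * b) * q = 0) :
    b * q = 0 := by
  refine (CStarRing.star_mul_self_eq_zero_iff _).mp ?_
  rw [star_mul, hb.star_eq, hq.star_eq]
  calc q * b * (b * q) = q * (b * b) * q := by noncomm_ring
  _ = 0 := h

/-- If `S = V|S|` is the polar decomposition of `S`, then
`| |T|·|S^*| | = V |TS| V^*` and `V |TS| = | |T|·|S^*| | V`. -/
theorem absOp_mul_absOp_adjoint_eq (T S V : H →L[ℂ] H)
    (hS : IsPolarDecompositionOp S V) :
    absOp (absOp T * absOp (adjoint S)) = V * absOp (T * S) * adjoint V ∧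
    V * absOp (T * S) = absOp (absOp T * absOp (adjoint S)) * V := by
  obtain ⟨hSeq, ⟨hPsa, hPidem⟩, -⟩ := hS
  rw [← star_eq_adjoint] at hPsa hPidem
  set B : H →L[ℂ] H := absOp S with hBdef
  set P : H →L[ℂ] H := star V * V with hPdef
  have hSeq' : S = V * B := hSeq
  have hB0 : 0 ≤ B := absOp_nonneg S
  have hBsa : IsSelfAdjoint B := absOp_isSelfAdjoint S
  have hBB : B * B = star S * S := absOp_mul_self S
  have hQsa : IsSelfAdjoint (1 - P) := by
    rw [IsSelfAdjoint, star_sub, star_one, hPsa.star_eq]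
  have hQQ : (1 - P) * (1 - P) = 1 - P := by
    calc (1 - P) * (1 - P) = 1 - P - P + P * P := by noncomm_ring
    _ = 1 - P := by rw [hPidem]; abel
  -- `(1 - V*V) |S| = 0`
  have hBPB : B * P * B = B * B := by
    rw [hBB, hSeq', hPdef, star_mul, hBsa.star_eq]
    noncomm_ring
  have hQB : (1 - P) * B = 0 := by
    refine proj_mul_eq_zero hQsa hQQ hBsa ?_
    calc B * (1 - P) * B = B * B - B * P * B := by noncomm_ring
    _ = 0 := by rw [hBPB, sub_self]
  have hPB : P * B = B := by
    have := hQB; rw [sub_mul, one_mul, sub_eq_zero] at this; exact this.symm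
  have hBP : B * P = B := by
    have := congrArg star hQB
    rw [star_mul, hQsa.star_eq, hBsa.star_eq, star_zero, mul_sub, mul_one,
      sub_eq_zero] at this
    exact this.symm
  -- `X = |TS|²`, `W = |TS|`
  set W : H →L[ℂ] H := absOp (T * S) with hWdef
  have hW0 : 0 ≤ W := absOp_nonneg _
  have hWsa : IsSelfAdjoint W := absOp_isSelfAdjoint _
  have hWW : W * W = star (T * S) * (T * S) := absOp_mul_self _
  have hX : star (T * S) * (T * S) = B * star V * (star T * T) * (V * B) := by
    rw [star_mul, hSeq', star_mul, hBsa.star_eq]; noncomm_ring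
  have hXP : (star (T * S) * (T * S)) * P = star (T * S) * (T * S) := by
    rw [hX]
    calc B * star V * (star T * T) * (V * B) * P
        = B * star V * (star T * T) * (V * (B * P)) := by noncomm_ring
    _ = B * star V * (star T * T) * (V * B) := by rw [hBP]
  have hPX : P * (star (T * S) * (T * S)) = star (T * S) * (T * S) := by
    have hXsa : IsSelfAdjoint (star (T * S) * (T * S)) := by
      rw [IsSelfAdjoint, star_mul, star_star]
    have := congrArg star hXP
    rwa [star_mul, hXsa.star_eq, hPsa.star_eq] at this
  have hWQ : W * (1 - P) = 0 := by
    refine mul_proj_eq_zero hQsa hWsa ?_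
    rw [hWW]
    calc (1 - P) * (star (T * S) * (T * S)) * (1 - P)
        = (1 - P) * ((star (T * S) * (T * S)) - (star (T * S) * (T * S)) * P) := by
          noncomm_ring
    _ = 0 := by rw [hXP, sub_self, mul_zero]
  have hWP : W * P = W := by
    have := hWQ; rw [mul_sub, mul_one, sub_eq_zero] at this; exact this.symm
  -- `|S*| = V |S| V*`
  have hR0 : 0 ≤ V * B * star V := star_right_conjugate_nonneg hB0 V
  have habsS' : absOp (adjoint S) = V * B * star V := by
    refine absOp_eq_of_sq hR0 ?_
    rw [← star_eq_adjoint, star_star]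
    calc V * B * star V * (V * B * star V)
        = V * (B * P * B) * star V := by rw [hPdef]; noncomm_ring
    _ = V * (B * B) * star V := by rw [hBPB]
    _ = S * star S := by rw [hSeq', star_mul, hBsa.star_eq]; noncomm_ring
  -- the candidate `C = V W V*`
  have hC0 : 0 ≤ V * W * star V := star_right_conjugate_nonneg hW0 V
  have hCC : (V * W * star V) * (V * W * star V)
      = star (absOp T * absOp (adjoint S)) * (absOp T * absOp (adjoint S)) := by
    have hTsa : IsSelfAdjoint (absOp T) := absOp_isSelfAdjoint T
    have hTT : absOp T * absOp T = star T * T := absOp_mul_self T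
    rw [habsS', star_mul, star_mul, star_mul, star_star, hBsa.star_eq, hTsa.star_eq]
    calc V * W * star V * (V * W * star V) = V * ((W * P) * W) * star V := by
          rw [hPdef]; noncomm_ring
    _ = V * (W * W) * star V := by rw [hWP]
    _ = V * (B * star V * (star T * T) * (V * B)) * star V := by rw [hWW, hX]
    _ = V * (B * star V * (absOp T * absOp T) * (V * B)) * star V := by rw [hTT]
    _ = V * B * star V * absOp T * (absOp T * (V * B * star V)) := by noncomm_ring
  have hgoal1 : absOp (absOp T * absOp (adjoint S)) = V * W * star V :=
    absOp_eq_of_sq hC0 hCC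
  constructor
  · rw [hgoal1, ← star_eq_adjoint]
  · rw [hgoal1]
    calc V * W = V * (W * P) := by rw [hWP]
    _ = V * W * star V * V := by rw [hPdef]; noncomm_ring
end

section
/- Let A and B be self-adjoint bounded operators on a complex Hilbert space H, and suppose there exist orthogonal projections p, q on H such that AB = pq|AB| is the polar decomposition of AB (i.e. pq is a partial isometry and (pq)^*(pq) equals the orthogonal projection onto the closure of the range of (AB)^*). Then AB = BA. -/
open ContinuousLinearMap

variable {H : Type*} [NormedAddCommGroup H] [InnerProductSpace ℂ H] [CompleteSpace H]

lemma absOp_mul_absOp (T : H →L[ℂ] H) : absOp T * absOp T = adjoint T * T := by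
  have hsa : IsSelfAdjoint (adjoint T * T) := by
    rw [← star_eq_adjoint]; exact IsSelfAdjoint.star_mul_self T
  have hnn : (0 : H →L[ℂ] H) ≤ adjoint T * T := by
    rw [← star_eq_adjoint]; exact star_mul_self_nonneg T
  rw [absOp, ← cfc_mul Real.sqrt Real.sqrt (adjoint T * T)]
  conv_rhs => rw [← cfc_id ℝ (adjoint T * T)]
  refine cfc_congr fun x hx => ?_
  have hx0 : 0 ≤ x :=
    (StarOrderedRing.nonneg_iff_spectrum_nonneg (R := ℝ) _ |>.mp hnn) x hx
  simp [Real.mul_self_sqrt hx0]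

lemma absOp_apply_eq_zero {T : H →L[ℂ] H} {y : H} (hy : T y = 0) : absOp T y = 0 := by
  have h1 : (inner ℂ (absOp T y) (absOp T y) : ℂ) = 0 := by
    have h2 : absOp T (absOp T y) = 0 := by
      have : (absOp T * absOp T) y = (adjoint T * T) y := by rw [absOp_mul_absOp]
      simpa [mul_apply, hy] using this
    have h3 := adjoint_inner_left (𝕜 := ℂ) (absOp T) (absOp T y) y
    rw [(absOp_isSelfAdjoint T).adjoint_eq] at h3
    rw [h3, h2, inner_zero_right]
  simpa using inner_self_eq_zero.mp h1

/-- If `A, B` are self-adjoint and `AB = pq|AB|` is the polar decomposition of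
`AB` for some orthogonal projections `p, q`, then `AB = BA`. -/
theorem commute_of_polarDecomposition_proj_mul (A B p q : H →L[ℂ] H)
    (hA : IsSelfAdjoint A) (hB : IsSelfAdjoint B)
    (hp : IsSelfAdjoint p ∧ p * p = p) (hq : IsSelfAdjoint q ∧ q * q = q)
    (h1 : A * B = (p * q) * absOp (A * B))
    (h2 : IsPartialIsometryOp (p * q))
    (h3 : adjoint (p * q) * (p * q) = rangeProjOp (adjoint (A * B))) :
    A * B = B * A := by
  set T := A * B with hT
  set U := p * q with hU
  set e := adjoint U * U with he
  have hadjU : adjoint U = q * p := by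
    rw [← star_eq_adjoint, hU, star_mul, star_eq_adjoint, star_eq_adjoint,
      hp.1.adjoint_eq, hq.1.adjoint_eq]
  have hUe : U = e := by
    have hq' : ∀ x : H →L[ℂ] H, q * (q * x) = q * x := fun x => by
      rw [← mul_assoc, hq.2]
    have hp' : ∀ x : H →L[ℂ] H, p * (p * x) = p * x := fun x => by
      rw [← mul_assoc, hp.2]
    have hee : e * e = e := h2.2
    have hestar : star e = e := h2.1
    have key : star (U - e) * (U - e) = 0 := by
      have h4 : e * U = e * e := by
        rw [he, hadjU, hU]
        simp only [mul_assoc, hp', hq']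
      have h5 : star U * e = e := by
        have h := congrArg star h4
        rw [star_mul e U, star_mul e e, hestar] at h
        rw [h, hee]
      have h6 : e * U = e := by rw [h4, hee]
      have h7 : star U * U = e := by rw [star_eq_adjoint, ← he]
      rw [star_sub, hestar, sub_mul, mul_sub, mul_sub, h7, h5, h6, hee]
      abel
    have := CStarRing.star_mul_self_eq_zero_iff (U - e) |>.mp key
    exact sub_eq_zero.mp this
  have hTabs : T = absOp T := by
    conv_lhs => rw [h1]
    rw [hUe, h3]
    ext x
    rw [rangeProjOp]
    simp only [ContinuousLinearMap.mul_apply, coe_comp', Function.comp_apply, Submodule.subtypeL_apply]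
    rw [← Submodule.starProjection_apply, Submodule.starProjection_eq_self_iff]
    rw [← Submodule.orthogonal_orthogonal_eq_closure]
    intro y hy
    rw [Submodule.mem_orthogonal] at hy
    have hTy : T y = 0 := by
      rw [← inner_self_eq_zero (𝕜 := ℂ)]
      have := hy (adjoint T (T y)) ⟨T y, rfl⟩
      rwa [adjoint_inner_left] at this
    have habsy : absOp T y = 0 := absOp_apply_eq_zero hTy
    have := adjoint_inner_left (𝕜 := ℂ) (absOp T) y x
    rw [(absOp_isSelfAdjoint T).adjoint_eq] at this
    rw [← inner_conj_symm, this, habsy, inner_zero_right, map_zero]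
  have hsaT : IsSelfAdjoint T := hTabs ▸ absOp_isSelfAdjoint T
  have := hsaT.star_eq
  rw [hT, star_mul, star_eq_adjoint, star_eq_adjoint, hA.adjoint_eq, hB.adjoint_eq] at this
  exact this.symm
end

section
/- Let T = U|T| and S = V|S| be the polar decompositions of bounded operators T, S on a complex Hilbert space H. Then the following are equivalent: (i) |T|·|S^*| = |S^*|·|T|; (ii) TS = UV|TS| is the polar decomposition of TS (i.e. UV is a partial isometry and (UV)^*(UV) equals the orthogonal projection onto the closure of the range of (TS)^*); (iii) TS = UV|TS|. -/
open ContinuousLinearMap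

variable {H : Type*} [NormedAddCommGroup H] [InnerProductSpace ℂ H] [CompleteSpace H]

set_option synthInstance.maxHeartbeats 1000000
set_option maxHeartbeats 2000000

namespace PolarAux

lemma adjoint_mul (X Y : H →L[ℂ] H) : adjoint (X * Y) = adjoint Y * adjoint X := by
  rw [← star_eq_adjoint, ← star_eq_adjoint, ← star_eq_adjoint, star_mul]

lemma adjoint_self_mul_nonneg (T : H →L[ℂ] H) : 0 ≤ adjoint T * T := by
  rw [← star_eq_adjoint]; exact star_mul_self_nonneg T

lemma absOp_nonneg (T : H →L[ℂ] H) : 0 ≤ absOp T :=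
  cfc_nonneg fun x _ => Real.sqrt_nonneg x

lemma absOp_adjoint_eq (T : H →L[ℂ] H) : adjoint (absOp T) = absOp T := by
  rw [← star_eq_adjoint]
  exact IsSelfAdjoint.of_nonneg (absOp_nonneg T)

lemma absOp_mul_self (T : H →L[ℂ] H) : absOp T * absOp T = adjoint T * T := by
  have h : 0 ≤ adjoint T * T := adjoint_self_mul_nonneg T
  rw [absOp, ← cfc_mul ..]
  conv_rhs => rw [← cfc_id (R := ℝ) (adjoint T * T)]
  exact cfc_congr fun x hx => Real.mul_self_sqrt (spectrum_nonneg_of_nonneg h hx)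

lemma absOp_unique {T C : H →L[ℂ] H} (hC : 0 ≤ C) (h : C * C = adjoint T * T) :
    absOp T = C := by
  rw [absOp, ← h]
  have hC' : IsSelfAdjoint C := IsSelfAdjoint.of_nonneg hC
  have : C * C = cfc (fun x : ℝ => x * x) C := by rw [cfc_mul .., cfc_id' ℝ C]
  rw [this, ← cfc_comp' Real.sqrt (fun x : ℝ => x * x) C]
  conv_rhs => rw [← cfc_id (R := ℝ) C]
  exact cfc_congr fun x hx => Real.sqrt_mul_self (spectrum_nonneg_of_nonneg hC hx)

/-- If `X† X = Y† Y` then `X` and `Y` have equal pointwise norms. -/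
lemma inner_self_eq {X Y : H →L[ℂ] H} (h : adjoint X * X = adjoint Y * Y) (v : H) :
    (inner ℂ (X v) (X v) : ℂ) = inner ℂ (Y v) (Y v) := by
  have l1 : (inner ℂ (X v) (X v) : ℂ) = inner ℂ ((adjoint X * X) v) v := by
    simp only [mul_apply_eq_comp]; rw [adjoint_inner_left]
  have l2 : (inner ℂ (Y v) (Y v) : ℂ) = inner ℂ ((adjoint Y * Y) v) v := by
    simp only [mul_apply_eq_comp]; rw [adjoint_inner_left]
  rw [l1, l2, h]

lemma apply_eq_zero_iff {X Y : H →L[ℂ] H} (h : adjoint X * X = adjoint Y * Y) (v : H) :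
    X v = 0 ↔ Y v = 0 := by
  rw [← inner_self_eq_zero (𝕜 := ℂ) (x := X v), ← inner_self_eq_zero (𝕜 := ℂ) (x := Y v),
    inner_self_eq h v]

lemma norm_apply_eq {X Y : H →L[ℂ] H} (h : adjoint X * X = adjoint Y * Y) (v : H) :
    ‖X v‖ = ‖Y v‖ := by
  have h1 := inner_self_eq h v
  rw [inner_self_eq_norm_sq_to_K (𝕜 := ℂ), inner_self_eq_norm_sq_to_K (𝕜 := ℂ)] at h1
  have h2 : (‖X v‖ : ℝ) ^ 2 = ‖Y v‖ ^ 2 := by exact_mod_cast h1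
  rw [← Real.sqrt_sq (norm_nonneg (X v)), ← Real.sqrt_sq (norm_nonneg (Y v)), h2]

/-- `|X| v = 0 ↔ X v = 0`. -/
lemma absOp_apply_eq_zero_iff (X : H →L[ℂ] H) (v : H) : absOp X v = 0 ↔ X v = 0 :=
  apply_eq_zero_iff (by rw [absOp_adjoint_eq, absOp_mul_self]) v

/-! ### rangeProjOp lemmas -/

lemma rangeProjOp_apply_mem (X : H →L[ℂ] H) (v : H) :
    rangeProjOp X v ∈ (LinearMap.range (X : H →ₗ[ℂ] H)).topologicalClosure :=
  (Submodule.orthogonalProjectionOnto _ v).2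

lemma rangeProjOp_apply_of_mem {X : H →L[ℂ] H} {v : H}
    (h : v ∈ (LinearMap.range (X : H →ₗ[ℂ] H)).topologicalClosure) : rangeProjOp X v = v :=
  Submodule.starProjection_eq_self_iff.mpr h

lemma orthogonal_closure_range (X : H →L[ℂ] H) :
    (LinearMap.range (X : H →ₗ[ℂ] H)).topologicalClosureᗮ = (LinearMap.range (X : H →ₗ[ℂ] H))ᗮ := by
  rw [← Submodule.orthogonal_orthogonal_eq_closure, Submodule.orthogonal_orthogonal]

lemma mem_orthogonal_range_iff {X : H →L[ℂ] H} {v : H} :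
    v ∈ (LinearMap.range (X : H →ₗ[ℂ] H))ᗮ ↔ adjoint X v = 0 := by
  rw [Submodule.mem_orthogonal']
  constructor
  · intro h
    have h2 : (inner ℂ (adjoint X v) (adjoint X v) : ℂ) = 0 := by
      rw [adjoint_inner_left]
      exact h (X (adjoint X v)) ⟨adjoint X v, rfl⟩
    simpa using inner_self_eq_zero.mp h2
  · rintro h _ ⟨w, rfl⟩
    change inner ℂ v (X w) = 0
    rw [← adjoint_inner_left, h, inner_zero_left]

lemma rangeProjOp_apply_of_orth {X : H →L[ℂ] H} {v : H}
    (h : adjoint X v = 0) : rangeProjOp X v = 0 := by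
  have hv : v ∈ (LinearMap.range (X : H →ₗ[ℂ] H)).topologicalClosureᗮ := by
    rw [orthogonal_closure_range]; exact mem_orthogonal_range_iff.mpr h
  simp only [rangeProjOp, coe_comp', Function.comp_apply]
  rw [Submodule.orthogonalProjectionOnto_apply_of_mem_orthogonal hv]
  rfl

lemma adjoint_sub_rangeProjOp (X : H →L[ℂ] H) (v : H) :
    adjoint X (v - rangeProjOp X v) = 0 := by
  have h : v - rangeProjOp X v ∈ (LinearMap.range (X : H →ₗ[ℂ] H))ᗮ := by
    rw [← orthogonal_closure_range]
    exact Submodule.sub_starProjection_mem_orthogonal v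
  exact mem_orthogonal_range_iff.mp h

/-- Lemma D: if `ker X† ⊆ ker A†` then the projection onto `cl ran X` fixes `A`. -/
lemma rangeProjOp_comp_eq {X A : H →L[ℂ] H}
    (h : ∀ y, adjoint X y = 0 → adjoint A y = 0) : rangeProjOp X * A = A := by
  ext x
  show rangeProjOp X (A x) = A x
  set u := A x - rangeProjOp X (A x) with hu
  have hXu : adjoint X u = 0 := adjoint_sub_rangeProjOp X (A x)
  have hAu : adjoint A u = 0 := h u hXu
  have h1 : (inner ℂ (A x) u : ℂ) = 0 := by
    rw [← adjoint_inner_right, hAu, inner_zero_right]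
  have h2 : (inner ℂ (rangeProjOp X (A x)) u : ℂ) = 0 := by
    have hm : rangeProjOp X (A x) ∈ (LinearMap.range (X : H →ₗ[ℂ] H)).topologicalClosure :=
      rangeProjOp_apply_mem X (A x)
    have hu' : u ∈ (LinearMap.range (X : H →ₗ[ℂ] H)).topologicalClosureᗮ :=
      Submodule.sub_starProjection_mem_orthogonal (K := (LinearMap.range (X : H →ₗ[ℂ] H)).topologicalClosure) (A x)
    exact (Submodule.mem_orthogonal _ _).1 hu' _ hm
  have h3 : (inner ℂ u u : ℂ) = 0 := by
    rw [hu, inner_sub_left, h1, h2, sub_zero]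
  have h0 := inner_self_eq_zero.mp h3
  rw [hu] at h0
  exact (sub_eq_zero.mp h0).symm

/-- Lemma A: characterization of `rangeProjOp`. -/
lemma eq_rangeProjOp {R X : H →L[ℂ] H} (h1 : R * X = X)
    (h2 : ∀ y, adjoint X y = 0 → R y = 0) : R = rangeProjOp X := by
  ext v
  show R v = rangeProjOp X v
  have hfix : ∀ m ∈ (LinearMap.range (X : H →ₗ[ℂ] H)).topologicalClosure, R m = m := by
    intro m hm
    have hsub : ((LinearMap.range (X : H →ₗ[ℂ] H) : Submodule ℂ H) : Set H) ⊆ {z | R z = z} := by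
      rintro _ ⟨w, rfl⟩
      exact congrFun (congrArg DFunLike.coe h1) w
    have hclosed : IsClosed {z : H | R z = z} :=
      isClosed_eq R.continuous continuous_id
    have hm' : m ∈ closure ((LinearMap.range (X : H →ₗ[ℂ] H) : Submodule ℂ H) : Set H) := by
      rw [← Submodule.topologicalClosure_coe]; exact hm
    exact closure_minimal hsub hclosed hm'
  have e1 : R (rangeProjOp X v) = rangeProjOp X v :=
    hfix _ (rangeProjOp_apply_mem X v)
  have e2 : R (v - rangeProjOp X v) = 0 := h2 _ (adjoint_sub_rangeProjOp X v)
  have h3 := map_sub R v (rangeProjOp X v)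
  rw [e2, e1] at h3
  exact (sub_eq_zero.mp h3.symm)

/-- Lemma E: an operator leaving `cl ran X` and `ker X†` invariant commutes with the
projection onto `cl ran X`. -/
lemma rangeProjOp_comm {X A : H →L[ℂ] H}
    (h1 : ∀ v, A (X v) ∈ (LinearMap.range (X : H →ₗ[ℂ] H)).topologicalClosure)
    (h2 : ∀ y, adjoint X y = 0 → adjoint X (A y) = 0) :
    rangeProjOp X * A = A * rangeProjOp X := by
  ext x
  show rangeProjOp X (A x) = A (rangeProjOp X x)
  have hAM : ∀ m ∈ (LinearMap.range (X : H →ₗ[ℂ] H)).topologicalClosure,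
      A m ∈ (LinearMap.range (X : H →ₗ[ℂ] H)).topologicalClosure := by
    intro m hm
    have hm' : m ∈ closure ((LinearMap.range (X : H →ₗ[ℂ] H) : Submodule ℂ H) : Set H) := by
      rw [← Submodule.topologicalClosure_coe]; exact hm
    have hcl : A m ∈ closure (((LinearMap.range (X : H →ₗ[ℂ] H)).topologicalClosure :
        Submodule ℂ H) : Set H) := by
      refine map_mem_closure A.continuous hm' ?_
      rintro _ ⟨w, rfl⟩
      exact h1 w
    rwa [IsClosed.closure_eq (Submodule.isClosed_topologicalClosure _)] at hcl
  have e1 : rangeProjOp X (A (rangeProjOp X x)) = A (rangeProjOp X x) :=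
    rangeProjOp_apply_of_mem (hAM _ (rangeProjOp_apply_mem X x))
  have e2 : rangeProjOp X (A (x - rangeProjOp X x)) = 0 :=
    rangeProjOp_apply_of_orth (h2 _ (adjoint_sub_rangeProjOp X x))
  have h3 : A x = A (rangeProjOp X x) + A (x - rangeProjOp X x) := by
    rw [← map_add]; congr 1; abel
  rw [h3, map_add, e1, e2, add_zero]

/-- An element commuting with a selfadjoint `a` commutes with `cfc f a`. -/
lemma commute_cfc' {a b : H →L[ℂ] H} (ha : IsSelfAdjoint a) (h : a * b = b * a) (f : ℝ → ℝ) :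
    cfc f a * b = b * cfc f a := by
  refine cfc_cases (fun x => x * b = b * x) a f (by simp) fun hf ha' => ?_
  have key : ∀ g : C(spectrum ℝ a, ℝ), cfcHom ha' g * b = b * cfcHom ha' g := by
    intro g
    induction g using ContinuousMap.induction_on_of_compact with
    | const r =>
        have hc : (ContinuousMap.const (spectrum ℝ a) r) =
            algebraMap ℝ C(spectrum ℝ a, ℝ) r := rfl
        rw [hc, AlgHomClass.commutes]
        exact (Algebra.commutes r b)
    | id => rw [cfcHom_id ha']; exact h
    | star_id =>
        have hs : star (ContinuousMap.restrict (spectrum ℝ a) (ContinuousMap.id ℝ)) =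
            ContinuousMap.restrict (spectrum ℝ a) (ContinuousMap.id ℝ) := by
          ext x; simp
        rw [hs, cfcHom_id ha']; exact h
    | add f' g' hf' hg' => rw [map_add, add_mul, mul_add, hf', hg']
    | mul f' g' hf' hg' =>
        rw [map_mul, mul_assoc, hg', ← mul_assoc, hf', mul_assoc]
    | frequently f' hfreq =>
        have hcl : IsClosed {g : C(spectrum ℝ a, ℝ) | cfcHom ha' g * b = b * cfcHom ha' g} := by
          have hc : Continuous (cfcHom ha' (R := ℝ)) := (cfcHom_isClosedEmbedding ha').continuous
          exact isClosed_eq ((hc.mul continuous_const)) ((continuous_const.mul hc))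
        have hmem : f' ∈ closure {g : C(spectrum ℝ a, ℝ) |
            cfcHom ha' g * b = b * cfcHom ha' g} := mem_closure_iff_frequently.mpr hfreq
        rwa [hcl.closure_eq] at hmem
  exact key _

/-- The product of commuting nonnegative operators is nonnegative. -/
lemma mul_nonneg_of_commute {a b : H →L[ℂ] H} (ha : 0 ≤ a) (hb : 0 ≤ b)
    (h : a * b = b * a) : 0 ≤ a * b := by
  set r := cfc Real.sqrt a with hr
  have hr0 : 0 ≤ r := cfc_nonneg fun x _ => Real.sqrt_nonneg x
  have hr_sa : star r = r := IsSelfAdjoint.of_nonneg hr0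
  have hrr : r * r = a := by
    rw [hr, ← cfc_mul ..]
    conv_rhs => rw [← cfc_id (R := ℝ) a]
    exact cfc_congr fun x hx => Real.mul_self_sqrt (spectrum_nonneg_of_nonneg ha hx)
  have hrb : r * b = b * r := commute_cfc' (IsSelfAdjoint.of_nonneg ha) h Real.sqrt
  have key : a * b = star r * b * r := by
    rw [hr_sa, ← hrr, mul_assoc, mul_assoc, ← hrb, ← mul_assoc]
  rw [key]
  exact star_left_conjugate_nonneg hb r

/-- A partial isometry satisfies `U (U†U) = U`. -/
lemma pi_mul_eq {U : H →L[ℂ] H}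
    (hidem : (adjoint U * U) * (adjoint U * U) = adjoint U * U) :
    U * (adjoint U * U) = U := by
  ext x
  show U ((adjoint U * U) x) = U x
  set E := adjoint U * U with hE
  set z := x - E x with hz
  have hEz : E z = 0 := by
    have := congrFun (congrArg DFunLike.coe hidem) x
    simp only [mul_apply_eq_comp] at this ⊢
    simp only [hz, map_sub]
    rw [show E (E x) = E x from by simpa [mul_apply_eq_comp] using this]
    simp [sub_self]
  have h1 : (inner ℂ (U z) (U z) : ℂ) = 0 := by
    rw [← adjoint_inner_left]
    have : adjoint U (U z) = E z := rfl
    rw [this, hEz, inner_zero_left]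
  have h2 : U z = 0 := inner_self_eq_zero.mp h1
  rw [hz, map_sub, sub_eq_zero] at h2
  exact h2.symm


lemma rangeProjOp_adjoint (X : H →L[ℂ] H) : adjoint (rangeProjOp X) = rangeProjOp X := by
  have := (isSelfAdjoint_starProjection (LinearMap.range (X : H →ₗ[ℂ] H)).topologicalClosure).adjoint_eq
  exact this

lemma projAbs (X : H →L[ℂ] H) : rangeProjOp (adjoint X) * absOp X = absOp X :=
  rangeProjOp_comp_eq fun y hy => by
    rw [adjoint_adjoint] at hy
    rw [absOp_adjoint_eq]
    exact (absOp_apply_eq_zero_iff X y).mpr hy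

lemma absProj (X : H →L[ℂ] H) : absOp X * rangeProjOp (adjoint X) = absOp X := by
  have := congrArg adjoint (projAbs X)
  rwa [adjoint_mul, absOp_adjoint_eq, rangeProjOp_adjoint] at this

lemma projIdem (X : H →L[ℂ] H) : rangeProjOp X * rangeProjOp X = rangeProjOp X :=
  rangeProjOp_comp_eq fun y hy => by
    rw [rangeProjOp_adjoint]
    exact rangeProjOp_apply_of_orth hy

lemma projAbs' (S : H →L[ℂ] H) : rangeProjOp S * absOp (adjoint S) = absOp (adjoint S) := by
  have := projAbs (adjoint S); rwa [adjoint_adjoint] at this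

lemma absProj' (S : H →L[ℂ] H) : absOp (adjoint S) * rangeProjOp S = absOp (adjoint S) := by
  have := absProj (adjoint S); rwa [adjoint_adjoint] at this

section PolarFacts
variable {S V : H →L[ℂ] H} (hS : IsPolarDecompositionOp S V)
include hS

lemma pd_VQ : V * rangeProjOp (adjoint S) = V := by
  have := pi_mul_eq hS.2.1.2
  rwa [hS.2.2] at this

lemma pd_QVadj : rangeProjOp (adjoint S) * adjoint V = adjoint V := by
  have := congrArg adjoint (pd_VQ hS)
  rwa [adjoint_mul, rangeProjOp_adjoint] at this

lemma pd_absAdj : absOp (adjoint S) = V * absOp S * adjoint V := by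
  have hQ : adjoint V * V = rangeProjOp (adjoint S) := hS.2.2
  have hQBs : rangeProjOp (adjoint S) * absOp S = absOp S := projAbs S
  refine absOp_unique ?_ ?_
  · have := star_right_conjugate_nonneg (absOp_nonneg S) V
    rwa [star_eq_adjoint] at this
  · rw [adjoint_adjoint]
    conv_rhs => rw [hS.1, adjoint_mul, absOp_adjoint_eq]
    simp only [mul_assoc]
    rw [← mul_assoc (adjoint V) V, hQ, ← mul_assoc (rangeProjOp (adjoint S)), hQBs]

lemma pd_SV : S * adjoint V = absOp (adjoint S) := by
  conv_lhs => rw [hS.1]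
  rw [pd_absAdj hS]

lemma pd_BV : absOp (adjoint S) * V = S := by
  rw [pd_absAdj hS]
  simp only [mul_assoc]
  rw [hS.2.2, absProj S]
  exact hS.1.symm

lemma pd_adjS : adjoint S = adjoint V * absOp (adjoint S) := by
  have := congrArg adjoint (pd_BV hS)
  rw [adjoint_mul, absOp_adjoint_eq] at this
  exact this.symm

lemma pd_Q'proj : V * adjoint V = rangeProjOp S := by
  refine eq_rangeProjOp ?_ ?_
  · conv_lhs => rw [hS.1]
    simp only [mul_assoc]
    rw [← mul_assoc (adjoint V) V, hS.2.2, projAbs S]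
    exact hS.1.symm
  · intro y hy
    have hBy : absOp (adjoint S) y = 0 := (absOp_apply_eq_zero_iff (adjoint S) y).mpr hy
    have hSz : S (adjoint V y) = 0 := by
      have := congrFun (congrArg DFunLike.coe (pd_SV hS)) y
      simp only [mul_apply_eq_comp] at this
      rw [this, hBy]
    have hQz : rangeProjOp (adjoint S) (adjoint V y) = 0 :=
      rangeProjOp_apply_of_orth (by rw [adjoint_adjoint]; exact hSz)
    have hz : adjoint V y = 0 := by
      have h2 := congrFun (congrArg DFunLike.coe (pd_QVadj hS)) y
      simp only [mul_apply_eq_comp] at h2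
      rw [hQz] at h2
      exact h2.symm
    show V (adjoint V y) = 0
    rw [hz, map_zero]

lemma pd_Q'V : rangeProjOp S * V = V := by
  rw [← pd_Q'proj hS, mul_assoc, hS.2.2, pd_VQ hS]

lemma pd_adjVQ' : adjoint V * rangeProjOp S = adjoint V := by
  have := congrArg adjoint (pd_Q'V hS)
  rwa [adjoint_mul, rangeProjOp_adjoint] at this

end PolarFacts


section CrossFacts
variable {T U S V : H →L[ℂ] H}

lemma pd_TS (hT : IsPolarDecompositionOp T U) (hS : IsPolarDecompositionOp S V) :
    T * S = U * (absOp T * (absOp (adjoint S) * V)) := by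
  conv_lhs => rw [hT.1, ← pd_BV hS]
  simp only [mul_assoc]

lemma pd_TSadj (hT : IsPolarDecompositionOp T U) (hS : IsPolarDecompositionOp S V) :
    adjoint (T * S) = adjoint V * (absOp (adjoint S) * (absOp T * adjoint U)) := by
  rw [pd_TS hT hS]
  simp only [adjoint_mul, absOp_adjoint_eq, mul_assoc]

lemma imp31 (hT : IsPolarDecompositionOp T U) (hS : IsPolarDecompositionOp S V)
    (h3 : T * S = (U * V) * absOp (T * S)) :
    absOp T * absOp (adjoint S) = absOp (adjoint S) * absOp T := by
  have rUU : ∀ x : H →L[ℂ] H, adjoint U * (U * x) = rangeProjOp (adjoint T) * x :=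
    fun x => by rw [← mul_assoc, hT.2.2]
  have rPA : ∀ x : H →L[ℂ] H, rangeProjOp (adjoint T) * (absOp T * x) = absOp T * x :=
    fun x => by rw [← mul_assoc, projAbs T]
  have rVV : ∀ x : H →L[ℂ] H, adjoint V * (V * x) = rangeProjOp (adjoint S) * x :=
    fun x => by rw [← mul_assoc, hS.2.2]
  have rSVV : ∀ x : H →L[ℂ] H, V * (adjoint V * x) = rangeProjOp S * x :=
    fun x => by rw [← mul_assoc, pd_Q'proj hS]
  have rQ'B : ∀ x : H →L[ℂ] H,
      rangeProjOp S * (absOp (adjoint S) * x) = absOp (adjoint S) * x :=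
    fun x => by rw [← mul_assoc, projAbs' S]
  have hQW : rangeProjOp (adjoint S) * absOp (T * S) = absOp (T * S) :=
    rangeProjOp_comp_eq fun y hy => by
      rw [adjoint_adjoint] at hy
      rw [absOp_adjoint_eq]
      refine (absOp_apply_eq_zero_iff (T * S) y).mpr ?_
      show (T * S) y = 0
      rw [mul_apply_eq_comp, hy, map_zero]
  have rQW : ∀ x : H →L[ℂ] H,
      rangeProjOp (adjoint S) * (absOp (T * S) * x) = absOp (T * S) * x :=
    fun x => by rw [← mul_assoc, hQW]
  have rWW : ∀ x : H →L[ℂ] H,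
      absOp (T * S) * (absOp (T * S) * x) = adjoint (T * S) * ((T * S) * x) :=
    fun x => by rw [← mul_assoc, absOp_mul_self, mul_assoc]
  have hABV : absOp T * (absOp (adjoint S) * V) =
      rangeProjOp (adjoint T) * (V * absOp (T * S)) := by
    have e := congrArg (fun X => adjoint U * X) h3
    conv at e => lhs; rw [pd_TS hT hS]
    simp only [mul_assoc] at e
    rw [rUU, rUU, rPA] at e
    exact e
  have hAB : absOp T * absOp (adjoint S) =
      rangeProjOp (adjoint T) * (V * (absOp (T * S) * adjoint V)) := by
    have e := congrArg (fun X => X * adjoint V) hABV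
    simp only [mul_assoc] at e
    rwa [pd_Q'proj hS, absProj' S] at e
  have hYsa : adjoint (V * (absOp (T * S) * adjoint V)) =
      V * (absOp (T * S) * adjoint V) := by
    simp only [adjoint_mul, adjoint_adjoint, absOp_adjoint_eq, mul_assoc]
  have hYY : (V * (absOp (T * S) * adjoint V)) * (V * (absOp (T * S) * adjoint V)) =
      absOp (adjoint S) * (absOp T * (absOp T * absOp (adjoint S))) := by
    simp only [mul_assoc]
    rw [rVV, rQW, rWW, pd_TSadj hT hS]
    rw [pd_TS hT hS]
    simp only [mul_assoc]
    rw [rSVV, rQ'B, rUU, rPA, pd_Q'proj hS, absProj' S]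
  have hpair : adjoint (absOp T * absOp (adjoint S)) * (absOp T * absOp (adjoint S)) =
      adjoint (V * (absOp (T * S) * adjoint V)) * (V * (absOp (T * S) * adjoint V)) := by
    rw [hYsa, hYY, adjoint_mul, absOp_adjoint_eq, absOp_adjoint_eq]
    simp only [mul_assoc]
  have hPY : ∀ x, rangeProjOp (adjoint T) ((V * (absOp (T * S) * adjoint V)) x) =
      (V * (absOp (T * S) * adjoint V)) x := by
    intro x
    set Yx := (V * (absOp (T * S) * adjoint V)) x with hYx
    set u := Yx - rangeProjOp (adjoint T) Yx with hu
    have hPu : rangeProjOp (adjoint T) u = 0 := by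
      rw [hu, map_sub]
      have hh := congrFun (congrArg DFunLike.coe (projIdem (adjoint T))) Yx
      simp only [mul_apply_eq_comp] at hh
      rw [hh, sub_self]
    have horth : (inner ℂ (rangeProjOp (adjoint T) Yx) u : ℂ) = 0 := by
      have e : (inner ℂ (rangeProjOp (adjoint T) Yx) u : ℂ) =
          inner ℂ Yx (rangeProjOp (adjoint T) u) := by
        conv_lhs => rw [← rangeProjOp_adjoint (adjoint T)]
        exact adjoint_inner_left _ _ _
      rw [e, hPu, inner_zero_right]
    have hdecomp : Yx = rangeProjOp (adjoint T) Yx + u := by rw [hu]; abel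
    have hnorm1 : ‖Yx‖ ^ 2 = ‖rangeProjOp (adjoint T) Yx‖ ^ 2 + ‖u‖ ^ 2 := by
      conv_lhs => rw [hdecomp]
      rw [norm_add_sq (𝕜 := ℂ), horth]
      simp
    have hPYx : rangeProjOp (adjoint T) Yx = (absOp T * absOp (adjoint S)) x := by
      rw [hAB, mul_apply_eq_comp]
    have hnorm2 : ‖rangeProjOp (adjoint T) Yx‖ = ‖Yx‖ := by
      rw [hPYx, hYx]
      exact (norm_apply_eq hpair x)
    have hu0 : ‖u‖ ^ 2 = 0 := by rw [hnorm2] at hnorm1; linarith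
    have hu0' : u = 0 := by
      have := pow_eq_zero_iff (n := 2) (by norm_num) |>.mp hu0
      exact norm_eq_zero.mp this
    rw [hu] at hu0'
    exact (sub_eq_zero.mp hu0').symm
  have hfin : absOp T * absOp (adjoint S) = V * (absOp (T * S) * adjoint V) := by
    rw [hAB]
    ext x
    show rangeProjOp (adjoint T) ((V * (absOp (T * S) * adjoint V)) x) = _
    exact hPY x
  have hconc := congrArg adjoint hfin
  rw [adjoint_mul, absOp_adjoint_eq, absOp_adjoint_eq, hYsa, ← hfin] at hconc
  exact hconc.symm


lemma imp12 (hT : IsPolarDecompositionOp T U) (hS : IsPolarDecompositionOp S V)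
    (hcomm : absOp T * absOp (adjoint S) = absOp (adjoint S) * absOp T) :
    IsPolarDecompositionOp (T * S) (U * V) := by
  have rUU : ∀ x : H →L[ℂ] H, adjoint U * (U * x) = rangeProjOp (adjoint T) * x :=
    fun x => by rw [← mul_assoc, hT.2.2]
  have rPA : ∀ x : H →L[ℂ] H, rangeProjOp (adjoint T) * (absOp T * x) = absOp T * x :=
    fun x => by rw [← mul_assoc, projAbs T]
  have rSVV : ∀ x : H →L[ℂ] H, V * (adjoint V * x) = rangeProjOp S * x :=
    fun x => by rw [← mul_assoc, pd_Q'proj hS]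
  have rQ'B : ∀ x : H →L[ℂ] H,
      rangeProjOp S * (absOp (adjoint S) * x) = absOp (adjoint S) * x :=
    fun x => by rw [← mul_assoc, projAbs' S]
  have rAB : ∀ x : H →L[ℂ] H,
      absOp T * (absOp (adjoint S) * x) = absOp (adjoint S) * (absOp T * x) :=
    fun x => by rw [← mul_assoc, hcomm, mul_assoc]
  have hTadj : adjoint T = absOp T * adjoint U := by
    conv_lhs => rw [hT.1]
    rw [adjoint_mul, absOp_adjoint_eq]
  -- P commutes with |S*|
  have hPB : rangeProjOp (adjoint T) * absOp (adjoint S) =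
      absOp (adjoint S) * rangeProjOp (adjoint T) := by
    refine rangeProjOp_comm ?_ ?_
    · intro v
      have e1 : adjoint T v = absOp T (adjoint U v) := by
        rw [hTadj, mul_apply_eq_comp]
      rw [e1]
      have e2 := congrFun (congrArg DFunLike.coe hcomm) (adjoint U v)
      simp only [mul_apply_eq_comp] at e2
      rw [← e2]
      have e3 := congrFun (congrArg DFunLike.coe (projAbs T)) (absOp (adjoint S) (adjoint U v))
      simp only [mul_apply_eq_comp] at e3
      rw [← e3]
      exact rangeProjOp_apply_mem _ _
    · intro y hy
      rw [adjoint_adjoint] at hy ⊢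
      have hAy : absOp T y = 0 := (absOp_apply_eq_zero_iff T y).mpr hy
      have hz : absOp T (absOp (adjoint S) y) = 0 := by
        have e := congrFun (congrArg DFunLike.coe hcomm) y
        simp only [mul_apply_eq_comp] at e
        rw [e, hAy, map_zero]
      exact (absOp_apply_eq_zero_iff T _).mp hz
  have rPB : ∀ x : H →L[ℂ] H, rangeProjOp (adjoint T) * (absOp (adjoint S) * x) =
      absOp (adjoint S) * (rangeProjOp (adjoint T) * x) :=
    fun x => by rw [← mul_assoc, hPB, mul_assoc]
  -- rangeProjOp S commutes with |T|
  have hQ'A : rangeProjOp S * absOp T = absOp T * rangeProjOp S := by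
    refine rangeProjOp_comm ?_ ?_
    · intro v
      have c1 : absOp T (S v) = S (adjoint V (absOp T (V v))) := by
        have e1 := congrFun (congrArg DFunLike.coe (pd_BV hS)) v
        simp only [mul_apply_eq_comp] at e1
        have e2 := congrFun (congrArg DFunLike.coe hcomm) (V v)
        simp only [mul_apply_eq_comp] at e2
        have e3 := congrFun (congrArg DFunLike.coe (pd_SV hS)) (absOp T (V v))
        simp only [mul_apply_eq_comp] at e3
        rw [← e1, e2, ← e3]
      rw [c1]
      exact Submodule.le_topologicalClosure _ ⟨_, rfl⟩
    · intro y hy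
      have hBy : absOp (adjoint S) y = 0 := (absOp_apply_eq_zero_iff (adjoint S) y).mpr hy
      have hz : absOp (adjoint S) (absOp T y) = 0 := by
        have e := congrFun (congrArg DFunLike.coe hcomm) y
        simp only [mul_apply_eq_comp] at e
        rw [← e, hBy, map_zero]
      exact (absOp_apply_eq_zero_iff (adjoint S) _).mp hz
  have rQ'A : ∀ x : H →L[ℂ] H,
      rangeProjOp S * (absOp T * x) = absOp T * (rangeProjOp S * x) :=
    fun x => by rw [← mul_assoc, hQ'A, mul_assoc]
  -- the two projections commute
  have hPQ' : rangeProjOp S * rangeProjOp (adjoint T) =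
      rangeProjOp (adjoint T) * rangeProjOp S := by
    refine rangeProjOp_comm ?_ ?_
    · intro v
      have c1 : rangeProjOp (adjoint T) (S v) =
          S (adjoint V (rangeProjOp (adjoint T) (V v))) := by
        have e1 := congrFun (congrArg DFunLike.coe (pd_BV hS)) v
        simp only [mul_apply_eq_comp] at e1
        have e2 := congrFun (congrArg DFunLike.coe hPB) (V v)
        simp only [mul_apply_eq_comp] at e2
        have e3 := congrFun (congrArg DFunLike.coe (pd_SV hS))
          (rangeProjOp (adjoint T) (V v))
        simp only [mul_apply_eq_comp] at e3
        rw [← e1, e2, ← e3]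
      rw [c1]
      exact Submodule.le_topologicalClosure _ ⟨_, rfl⟩
    · intro y hy
      have hBy : absOp (adjoint S) y = 0 := (absOp_apply_eq_zero_iff (adjoint S) y).mpr hy
      have hz : absOp (adjoint S) (rangeProjOp (adjoint T) y) = 0 := by
        have e := congrFun (congrArg DFunLike.coe hPB) y
        simp only [mul_apply_eq_comp] at e
        rw [← e, hBy, map_zero]
      exact (absOp_apply_eq_zero_iff (adjoint S) _).mp hz
  have rPQ' : ∀ x : H →L[ℂ] H,
      rangeProjOp (adjoint T) * (rangeProjOp S * x) =
        rangeProjOp S * (rangeProjOp (adjoint T) * x) :=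
    fun x => by rw [← mul_assoc, ← hPQ', mul_assoc]
  have rPP : ∀ x : H →L[ℂ] H, rangeProjOp (adjoint T) * (rangeProjOp (adjoint T) * x) =
      rangeProjOp (adjoint T) * x :=
    fun x => by rw [← mul_assoc, projIdem (adjoint T)]
  -- identification of |TS|
  have habs : absOp (T * S) = adjoint V * (absOp T * absOp (adjoint S)) * V := by
    refine absOp_unique ?_ ?_
    · have h0 : 0 ≤ absOp T * absOp (adjoint S) :=
        mul_nonneg_of_commute (absOp_nonneg T) (absOp_nonneg (adjoint S)) hcomm
      have := star_left_conjugate_nonneg h0 V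
      rwa [star_eq_adjoint] at this
    · have e_rhs : adjoint (T * S) * (T * S) = adjoint V * (absOp (adjoint S) *
          (absOp T * (absOp T * (absOp (adjoint S) * V)))) := by
        rw [pd_TSadj hT hS, pd_TS hT hS]
        simp only [mul_assoc]
        rw [rUU, rPA]
      have e_lhs : (adjoint V * (absOp T * absOp (adjoint S)) * V) *
          (adjoint V * (absOp T * absOp (adjoint S)) * V) = adjoint V * (absOp (adjoint S) *
          (absOp T * (absOp T * (absOp (adjoint S) * V)))) := by
        simp only [mul_assoc]
        rw [rSVV, rQ'A, rQ'B, rAB]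
      exact e_lhs.trans e_rhs.symm
  -- (iii)
  have h3 : T * S = (U * V) * absOp (T * S) := by
    rw [habs]
    simp only [mul_assoc]
    rw [rSVV, rQ'A, rQ'B]
    exact pd_TS hT hS
  -- partial isometry
  have hR : adjoint (U * V) * (U * V) = adjoint V * (rangeProjOp (adjoint T) * V) := by
    rw [adjoint_mul]
    simp only [mul_assoc]
    rw [rUU]
  have hsa : IsSelfAdjoint (adjoint (U * V) * (U * V)) := by
    rw [hR]
    show star _ = _
    rw [star_eq_adjoint, adjoint_mul, adjoint_mul, rangeProjOp_adjoint, adjoint_adjoint,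
      mul_assoc]
  have hadjVQ'2 : ∀ x : H →L[ℂ] H, adjoint V * (rangeProjOp S * x) = adjoint V * x :=
    fun x => by rw [← mul_assoc, pd_adjVQ' hS]
  have hidem : (adjoint (U * V) * (U * V)) * (adjoint (U * V) * (U * V)) =
      adjoint (U * V) * (U * V) := by
    rw [hR]
    simp only [mul_assoc]
    rw [rSVV, rPQ', rPP, hadjVQ'2]
  have hproj : adjoint (U * V) * (U * V) = rangeProjOp (adjoint (T * S)) := by
    rw [hR]
    refine eq_rangeProjOp ?_ ?_
    · rw [pd_TSadj hT hS]
      simp only [mul_assoc]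
      rw [rSVV, rPQ', rPB, rPA, rQ'B]
    · intro y hy
      rw [adjoint_adjoint] at hy
      have hz : absOp T (absOp (adjoint S) (V y)) = 0 := by
        have e := congrFun (congrArg DFunLike.coe (pd_TS hT hS)) y
        simp only [mul_apply_eq_comp] at e
        have hy' : T (S y) = 0 := hy
        rw [hy'] at e
        have e2 := congrArg (adjoint U) e.symm
        rw [map_zero] at e2
        have e3 : adjoint U (U (absOp T (absOp (adjoint S) (V y)))) =
            rangeProjOp (adjoint T) (absOp T (absOp (adjoint S) (V y))) := by
          have h4 := congrFun (congrArg DFunLike.coe hT.2.2)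
            (absOp T (absOp (adjoint S) (V y)))
          simpa only [mul_apply_eq_comp] using h4
        have e4 : rangeProjOp (adjoint T) (absOp T (absOp (adjoint S) (V y))) =
            absOp T (absOp (adjoint S) (V y)) := by
          have h5 := congrFun (congrArg DFunLike.coe (projAbs T)) (absOp (adjoint S) (V y))
          simpa only [mul_apply_eq_comp] using h5
        rw [e3, e4] at e2
        exact e2
      have hw : rangeProjOp S (V y) = V y := by
        have h6 := congrFun (congrArg DFunLike.coe (pd_Q'V hS)) y
        simpa only [mul_apply_eq_comp] using h6
      have hBA : absOp (adjoint S) (absOp T (V y)) = 0 := by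
        have e := congrFun (congrArg DFunLike.coe hcomm) (V y)
        simp only [mul_apply_eq_comp] at e
        rw [← e]
        exact hz
      have hSA : adjoint S (absOp T (V y)) = 0 :=
        (absOp_apply_eq_zero_iff (adjoint S) _).mp hBA
      have hmem : absOp T (V y) ∈ (LinearMap.range (S : H →ₗ[ℂ] H)).topologicalClosure := by
        have e : rangeProjOp S (absOp T (V y)) = absOp T (V y) := by
          have h7 := congrFun (congrArg DFunLike.coe hQ'A) (V y)
          simp only [mul_apply_eq_comp] at h7
          rw [hw] at h7
          exact h7
        rw [← e]
        exact rangeProjOp_apply_mem _ _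
      have hAVy : absOp T (V y) = 0 := by
        have horth : absOp T (V y) ∈ (LinearMap.range (S : H →ₗ[ℂ] H))ᗮ := mem_orthogonal_range_iff.mpr hSA
        rw [← orthogonal_closure_range] at horth
        have h8 := (Submodule.mem_orthogonal _ _).1 horth _ hmem
        exact inner_self_eq_zero.mp h8
      have hTw : T (V y) = 0 := by
        conv_lhs => rw [hT.1]
        rw [mul_apply_eq_comp, hAVy, map_zero]
      have hPw : rangeProjOp (adjoint T) (V y) = 0 :=
        rangeProjOp_apply_of_orth (by rw [adjoint_adjoint]; exact hTw)
      show (adjoint V * (rangeProjOp (adjoint T) * V)) y = 0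
      rw [mul_apply_eq_comp, mul_apply_eq_comp, hPw, map_zero]
  exact ⟨h3, ⟨hsa, hidem⟩, hproj⟩

end CrossFacts

end PolarAux

open PolarAux

/-- For polar decompositions `T = U|T|` and `S = V|S|`, the following are
equivalent: (i) `|T||S^*| = |S^*||T|`; (ii) `TS = UV|TS|` is the polar
decomposition of `TS`; (iii) `TS = UV|TS|`. -/
theorem tfae_polarDecomposition_mul (T S U V : H →L[ℂ] H)
    (hT : IsPolarDecompositionOp T U) (hS : IsPolarDecompositionOp S V) :
    List.TFAE [absOp T * absOp (adjoint S) = absOp (adjoint S) * absOp T,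
      IsPolarDecompositionOp (T * S) (U * V),
      T * S = (U * V) * absOp (T * S)] := by
  tfae_have 1 → 2
  · exact fun h => imp12 hT hS h
  tfae_have 2 → 3
  · exact fun h => h.1
  tfae_have 3 → 1
  · exact fun h => imp31 hT hS h
  tfae_finish
end

section
/- Let T be a bounded operator on a complex Hilbert space H with polar decomposition T = U|T|, and let n ∈ ℕ be such that U^n is a partial isometry. Then the following are equivalent: (i) (U^n)^*U^n commutes with UU^*; (ii) U^{n+1} is a partial isometry; (iii) U^n(U^n)^* commutes with U^*U. -/
open ContinuousLinearMap

variable {H : Type*} [NormedAddCommGroup H] [InnerProductSpace ℂ H] [CompleteSpace H]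

section CStarAux

variable {A : Type*} [NormedRing A] [StarRing A] [CStarRing A]

/-- In a C*-ring, an element with idempotent `star u * u` is tripotent. -/
lemma aux_tripotent_of_idem {u : A} (h : (star u * u) * (star u * u) = star u * u) :
    u * (star u * u) = u := by
  have key : star (u * (star u * u) - u) * (u * (star u * u) - u)
      = (star u * u) * ((star u * u) * (star u * u)) - (star u * u) * (star u * u)
        - ((star u * u) * (star u * u) - star u * u) := by
    simp only [star_sub, star_mul, star_star]
    noncomm_ring
  rw [h, h] at key
  simp only [sub_self, sub_zero] at key
  exact sub_eq_zero.mp ((CStarRing.star_mul_self_eq_zero_iff _).mp key)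

/-- Two projections in a C*-ring whose product is idempotent commute. -/
lemma aux_proj_comm_of_idem {q e : A} (hq : star q = q) (he : star e = e)
    (hqq : q * q = q) (hee : e * e = e) (h : (q * e) * (q * e) = q * e) :
    q * e = e * q := by
  have key : (q * e - q * e * q) * star (q * e - q * e * q)
      = q * (e * e) * q - ((q * e) * (q * e)) * q
        - (((q * e) * (q * e)) * q - (q * e) * ((q * q) * (e * q))) := by
    simp only [star_sub, star_mul, hq, he]
    noncomm_ring
  rw [hee, hqq, h] at key
  have key2 : (q * e - q * e * q) * star (q * e - q * e * q) = 0 := by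
    rw [key]
    have h3 : (q * e) * (q * (e * q)) = (q * e) * (q * e) * q := by noncomm_ring
    rw [h3, h]
    abel
  have h1 : q * e = q * e * q :=
    sub_eq_zero.mp ((CStarRing.mul_star_self_eq_zero_iff _).mp key2)
  have h2 : star (q * e) = q * e := by
    rw [h1]; simp only [star_mul, hq, he]; noncomm_ring
  calc q * e = star (q * e) := h2.symm
    _ = e * q := by rw [star_mul, hq, he]

lemma aux_tripotent_star {v : A} (h : v * (star v * v) = v) :
    star v * (v * star v) = star v := by
  have h1 : star v * (v * star v) = star (v * (star v * v)) := by
    simp [star_mul, star_star, mul_assoc]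
  rw [h1, h]

lemma aux_key {u : A} {n : ℕ} (hu : u * (star u * u) = u)
    (hn : (star (u ^ n) * u ^ n) * (star (u ^ n) * u ^ n) = star (u ^ n) * u ^ n) :
    (star (u ^ n) * u ^ n) * (u * star u) = (u * star u) * (star (u ^ n) * u ^ n) ↔
      u ^ (n + 1) * (star (u ^ (n + 1)) * u ^ (n + 1)) = u ^ (n + 1) := by
  have hq : star (star (u ^ n) * u ^ n) = star (u ^ n) * u ^ n := by
    simp [star_mul, star_star]
  have he : star (u * star u) = u * star u := by simp [star_mul, star_star]
  have hee : (u * star u) * (u * star u) = u * star u := by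
    have h1 : (u * star u) * (u * star u) = (u * (star u * u)) * star u := by noncomm_ring
    rw [h1, hu]
  have heu : (u * star u) * u = u := by
    have h1 : (u * star u) * u = u * (star u * u) := by noncomm_ring
    rw [h1, hu]
  have hunq : u ^ n * (star (u ^ n) * u ^ n) = u ^ n := aux_tripotent_of_idem hn
  have lhs_eq : u ^ (n + 1) * (star (u ^ (n + 1)) * u ^ (n + 1))
      = u ^ n * (((u * star u) * (star (u ^ n) * u ^ n)) * u) := by
    rw [pow_succ, star_mul]; noncomm_ring
  constructor
  · intro hcomm
    calc u ^ (n + 1) * (star (u ^ (n + 1)) * u ^ (n + 1))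
        = u ^ n * (((u * star u) * (star (u ^ n) * u ^ n)) * u) := lhs_eq
      _ = u ^ n * (((star (u ^ n) * u ^ n) * (u * star u)) * u) := by rw [hcomm]
      _ = (u ^ n * (star (u ^ n) * u ^ n)) * ((u * star u) * u) := by noncomm_ring
      _ = u ^ n * u := by rw [hunq, heu]
      _ = u ^ (n + 1) := (pow_succ u n).symm
  · intro hC
    have hC' : u ^ n * (((u * star u) * (star (u ^ n) * u ^ n)) * u) = u ^ n * u :=
      lhs_eq.symm.trans (hC.trans (pow_succ u n))
    have hid : ((star (u ^ n) * u ^ n) * (u * star u)) * ((star (u ^ n) * u ^ n) * (u * star u))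
        = (star (u ^ n) * u ^ n) * (u * star u) := by
      have h1 : (star (u ^ n) * (u ^ n * (((u * star u) * (star (u ^ n) * u ^ n)) * u))) * star u
          = ((star (u ^ n) * u ^ n) * (u * star u)) * ((star (u ^ n) * u ^ n) * (u * star u)) := by
        noncomm_ring
      have h2 : (star (u ^ n) * (u ^ n * u)) * star u
          = (star (u ^ n) * u ^ n) * (u * star u) := by noncomm_ring
      rw [← h1, hC', h2]
    exact aux_proj_comm_of_idem hq he hn hee hid

end CStarAux

lemma isPartialIsometryOp_iff_tripotent (V : H →L[ℂ] H) :
    IsPartialIsometryOp V ↔ V * (star V * V) = V := by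
  constructor
  · intro h
    exact aux_tripotent_of_idem (by rw [star_eq_adjoint]; exact h.2)
  · intro h
    constructor
    · rw [← star_eq_adjoint]
      show star (star V * V) = star V * V
      simp [star_mul, star_star]
    · rw [← star_eq_adjoint]
      calc (star V * V) * (star V * V) = star V * (V * (star V * V)) := by noncomm_ring
        _ = star V * V := by rw [h]

/-- If `U^n` is a partial isometry, the following are equivalent:
(i) `(U^n)^* U^n` commutes with `U U^*`; (ii) `U^{n+1}` is a partial isometry;
(iii) `U^n (U^n)^*` commutes with `U^* U`. -/
theorem tfae_partialIsometry_pow_succ (T U : H →L[ℂ] H)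
    (hT : IsPolarDecompositionOp T U) (n : ℕ)
    (hU : IsPartialIsometryOp (U ^ n)) :
    List.TFAE [Commute (adjoint (U ^ n) * U ^ n) (U * adjoint U),
      IsPartialIsometryOp (U ^ (n + 1)),
      Commute (U ^ n * adjoint (U ^ n)) (adjoint U * U)] := by
  have hu : U * (star U * U) = U := (isPartialIsometryOp_iff_tripotent U).mp hT.2.1
  have hn : (star (U ^ n) * U ^ n) * (star (U ^ n) * U ^ n) = star (U ^ n) * U ^ n := by
    rw [star_eq_adjoint]; exact hU.2
  tfae_have 1 ↔ 2 := by
    rw [commute_iff_eq, isPartialIsometryOp_iff_tripotent]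
    simp only [← star_eq_adjoint]
    exact aux_key hu hn
  tfae_have 2 ↔ 3 := by
    have hu' : star U * (star (star U) * star U) = star U := by
      rw [star_star]; exact aux_tripotent_star hu
    have hn' : (star ((star U) ^ n) * (star U) ^ n) * (star ((star U) ^ n) * (star U) ^ n)
        = star ((star U) ^ n) * (star U) ^ n := by
      simp only [← star_pow, star_star]
      have h1 : (U ^ n * star (U ^ n)) * (U ^ n * star (U ^ n))
          = (U ^ n * (star (U ^ n) * U ^ n)) * star (U ^ n) := by noncomm_ring
      rw [h1, aux_tripotent_of_idem hn]
    have hkey := aux_key hu' hn'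
    simp only [← star_pow, star_star] at hkey
    have iff2 : star (U ^ (n + 1)) * (U ^ (n + 1) * star (U ^ (n + 1))) = star (U ^ (n + 1)) ↔
        U ^ (n + 1) * (star (U ^ (n + 1)) * U ^ (n + 1)) = U ^ (n + 1) := by
      constructor
      · intro h
        have h' : star (U ^ (n + 1)) * (star (star (U ^ (n + 1))) * star (U ^ (n + 1)))
            = star (U ^ (n + 1)) := by rw [star_star]; exact h
        simpa [star_star] using aux_tripotent_star h'
      · intro h
        exact aux_tripotent_star h
    rw [commute_iff_eq, isPartialIsometryOp_iff_tripotent]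
    simp only [← star_eq_adjoint]
    exact (hkey.trans iff2).symm
  tfae_finish
end

section
/- Let T be a bounded operator on a complex Hilbert space H with polar decomposition T = U|T| which is binormal, i.e. T^*T commutes with TT^*. Then for all real α > 0 and β > 0: U|T|^α U^* commutes with |T|^β, and U^*|T|^α U commutes with |T|^β. -/
set_option maxHeartbeats 1000000


open ContinuousLinearMap

variable {H : Type*} [NormedAddCommGroup H] [InnerProductSpace ℂ H] [CompleteSpace H]

/-- For a positive operator `T` and real `α`, the power `T^α` defined by the
continuous functional calculus. -/
noncomputable def powOp (T : H →L[ℂ] H) (α : ℝ) : H →L[ℂ] H :=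
  cfc (fun x : ℝ => x ^ α) T

section CStarHelpers

open Polynomial

variable {A : Type*} [CStarAlgebra A]

lemma my_commute_cfcHom (x a : A) (ha : IsSelfAdjoint a) (hx : Commute x a)
    (g : C(spectrum ℝ a, ℝ)) : Commute x (cfcHom ha g) := by
  let s : Set ℝ := spectrum ℝ a
  let K : Subalgebra ℝ C(s, ℝ) :=
  { carrier := {g | Commute x (cfcHom ha g)}
    mul_mem' := fun {g h} hg hh => by
      simpa [map_mul] using Commute.mul_right hg hh
    add_mem' := fun {g h} hg hh => by
      simpa [map_add] using Commute.add_right hg hh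
    algebraMap_mem' := fun r => by
      show Commute x (cfcHom ha (algebraMap ℝ C(s, ℝ) r))
      rw [AlgHomClass.commutes]
      exact Algebra.commute_algebraMap_right r x }
  have hKclosed : IsClosed (K : Set C(s, ℝ)) := by
    have hc : Continuous (cfcHom ha (R := ℝ)) := (cfcHom_isClosedEmbedding ha).continuous
    exact isClosed_eq (by continuity) (by continuity)
  have hX : (toContinuousMapOnAlgHom s X : C(s, ℝ)) ∈ K := by
    show Commute x (cfcHom ha _)
    have : (toContinuousMapOnAlgHom s X : C(s, ℝ))
        = ContinuousMap.restrict s (ContinuousMap.id ℝ) := by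
      ext y; simp
    rw [this, cfcHom_id ha]
    exact hx
  have hle : polynomialFunctions s ≤ K := by
    rw [polynomialFunctions.eq_adjoin_X]
    exact Algebra.adjoin_le (by rintro y ⟨rfl⟩; exact hX)
  have htop : (⊤ : Subalgebra ℝ C(s, ℝ)) ≤ K := by
    rw [← polynomialFunctions.topologicalClosure s]
    exact Subalgebra.topologicalClosure_minimal hle hKclosed
  exact htop (by trivial)

lemma my_commute_cfc (x a : A) (ha : IsSelfAdjoint a) (hx : Commute x a)
    (f : ℝ → ℝ) : Commute x (cfc f a) := by
  refine cfc_cases (fun y => Commute x y) a f (Commute.zero_right x) fun hf ha' => ?_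
  exact my_commute_cfcHom x a ha' hx _

lemma my_commute_cfcₙHom (x a : A) (ha : IsSelfAdjoint a) (hx : Commute x a)
    (g : ContinuousMapZero (quasispectrum ℝ a) ℝ) : Commute x (cfcₙHom (R := ℝ) ha g) := by
  rw [cfcₙHom_eq_cfcₙ_extend (0 : ℝ → ℝ)]
  refine cfcₙ_cases (fun y => Commute x y) a _ (Commute.zero_right x) fun hf h0 ha' => ?_
  rw [← cfcₙ_apply _ _ hf h0 ha', cfcₙ_eq_cfc]
  exact my_commute_cfc x a ha hx _

end CStarHelpers

section ConjHelpers

variable {A : Type*} [CStarAlgebra A] [PartialOrder A] [StarOrderedRing A]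

lemma my_conj_cfcₙ (u a : A) (ha : 0 ≤ a)
    (hua : (star u * u) * a = a) (hau : a * (star u * u) = a)
    (huP : u * (star u * u) = u)
    (f : ℝ → ℝ) (hf : Continuous f) (hf0 : f 0 = 0) :
    cfcₙ f (u * a * star u) = u * cfcₙ f a * star u := by
  have hsa : IsSelfAdjoint a := .of_nonneg ha
  have hb0 : 0 ≤ u * a * star u := star_right_conjugate_nonneg ha u
  have hsb : IsSelfAdjoint (u * a * star u) := .of_nonneg hb0
  have hPst : (star u * u) * star u = star u := by
    have := congrArg star huP
    simpa [star_mul, mul_assoc] using this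
  have hPcomm : Commute (star u * u) a := by
    rw [Commute, SemiconjBy, hua, hau]
  -- quasispectrum inclusion
  have hσ : quasispectrum ℝ a ⊆ quasispectrum ℝ (u * a * star u) := by
    have h1 := spectrum.nonzero_mul_comm (𝕜 := ℝ) u (a * star u)
    have h2 : a * star u * u = a := by
      rw [mul_assoc]; exact hau
    rw [h2, ← mul_assoc] at h1
    rw [quasispectrum_eq_spectrum_union_zero, quasispectrum_eq_spectrum_union_zero]
    intro x hx
    rcases hx with hx | hx
    · by_cases hx0 : x = (0 : ℝ)
      · exact Or.inr hx0
      · exact Or.inl (h1.superset ⟨hx, hx0⟩).1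
    · exact Or.inr hx
  set s := quasispectrum ℝ (u * a * star u) with hs
  set t := quasispectrum ℝ a with ht
  let ι : ContinuousMapZero t s := ⟨⟨Set.inclusion hσ, continuous_id.subtype_map hσ⟩, rfl⟩
  let Λ := ContinuousMapZero.nonUnitalStarAlgHom_precomp (X := t) (Y := s) ℝ ι
  let χ := (cfcₙHom (R := ℝ) hsa).comp Λ
  have hχcomm : ∀ g : ContinuousMapZero s ℝ, Commute (star u * u) (χ g) :=
    fun g => my_commute_cfcₙHom _ a hsa hPcomm _
  have hχcont : Continuous χ :=
    (cfcₙHom_continuous hsa).comp (ContinuousMapZero.continuous_comp_left ι)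
  let ψ : ContinuousMapZero s ℝ →⋆ₙₐ[ℝ] A :=
  { toFun := fun g => u * χ g * star u
    map_zero' := by simp
    map_add' := fun g h => by simp [map_add, mul_add, add_mul]
    map_smul' := fun r g => by simp [map_smul, mul_smul_comm, smul_mul_assoc]
    map_mul' := fun g h => by
      show u * χ (g * h) * star u = (u * χ g * star u) * (u * χ h * star u)
      rw [map_mul]
      have hcy := (hχcomm h).eq
      have key : star u * (u * (χ h * star u)) = χ h * star u := by
        rw [← mul_assoc, ← mul_assoc, hcy, mul_assoc, hPst]
      simp only [mul_assoc, key]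
    map_star' := fun g => by
      show u * χ (star g) * star u = star (u * χ g * star u)
      simp [star_mul, mul_assoc, ← map_star] }
  have hψcont : Continuous ψ := by
    show Continuous fun g => u * χ g * star u
    fun_prop
  have hφψ : cfcₙHom (R := ℝ) hsb = ψ := by
    refine NonUnitalStarAlgHom.ext_continuousMap (R := ℝ) _ _ ψ
      (cfcₙHom_continuous hsb) hψcont ?_
    show cfcₙHom hsb _ = u * χ _ * star u
    have hΛ : Λ (ContinuousMapZero.id s) = ContinuousMapZero.id t := by
      ext x; rfl
    rw [cfcₙHom_id hsb]
    show _ = u * cfcₙHom hsa (Λ _) * star u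
    rw [hΛ, cfcₙHom_id hsa]
  have hfc : ContinuousOn f s := hf.continuousOn
  have hfct : ContinuousOn f t := hf.continuousOn
  rw [cfcₙ_apply f (u * a * star u) hfc hf0 hsb, hφψ]
  show u * cfcₙHom hsa (Λ _) * star u = _
  have hΛf : Λ ⟨⟨s.domRestrict f, hfc.restrict⟩, by
        rw [ContinuousMap.coe_mk, Set.domRestrict_apply]
        rw [show ((0 : s) : ℝ) = (0 : ℝ) from rfl]
        exact hf0⟩
      = ⟨⟨t.domRestrict f, hfct.restrict⟩, by
        rw [ContinuousMap.coe_mk, Set.domRestrict_apply]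
        rw [show ((0 : t) : ℝ) = (0 : ℝ) from rfl]
        exact hf0⟩ := by
    ext x; rfl
  rw [hΛf, ← cfcₙ_apply f a hfct hf0 hsa]

end ConjHelpers

/-- If `T = U|T|` is binormal, then `U|T|^α U^*` and `U^*|T|^α U` commute
with `|T|^β` for all `α, β > 0`. -/
theorem commute_of_binormal (T U : H →L[ℂ] H)
    (hT : IsPolarDecompositionOp T U)
    (hbin : Commute (adjoint T * T) (T * adjoint T))
    (α β : ℝ) (hα : 0 < α) (hβ : 0 < β) :
    Commute (U * powOp (absOp T) α * adjoint U) (powOp (absOp T) β) ∧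
    Commute (adjoint U * powOp (absOp T) α * U) (powOp (absOp T) β) := by
  obtain ⟨hTU, ⟨hPsa, hPidem⟩, hProj⟩ := hT
  have ha : 0 ≤ adjoint T * T := by simpa [star_eq_adjoint] using star_mul_self_nonneg T
  have hasa : IsSelfAdjoint (adjoint T * T) := .of_nonneg ha
  have hb0 : 0 ≤ T * adjoint T := by simpa [star_eq_adjoint] using mul_star_self_nonneg T
  have hbsa : IsSelfAdjoint (T * adjoint T) := .of_nonneg hb0
  have hR0 : 0 ≤ absOp T := by
    simp only [absOp]; exact cfc_nonneg fun x _ => Real.sqrt_nonneg x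
  have hRsa : IsSelfAdjoint (absOp T) := .of_nonneg hR0
  have hRR : absOp T * absOp T = adjoint T * T := by
    simp only [absOp]
    rw [← cfc_mul ..]
    have h2 := cfc_congr (a := adjoint T * T) (f := fun x => Real.sqrt x * Real.sqrt x)
      (g := id) ?_
    · rw [h2, cfc_id ℝ _ hasa]
    · intro x hx
      have hx0 : 0 ≤ x := spectrum_nonneg_of_nonneg ha hx
      simp [Real.mul_self_sqrt hx0]
  -- facts about P := adjoint U * U
  have hPT : (adjoint U * U) * adjoint T = adjoint T := by
    rw [hProj]
    ext z
    have hz : adjoint T z ∈ (LinearMap.range (adjoint T : H →ₗ[ℂ] H)).topologicalClosure :=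
      Submodule.le_topologicalClosure _ (LinearMap.mem_range_self _ z)
    show rangeProjOp (adjoint T) (adjoint T z) = adjoint T z
    exact Submodule.starProjection_eq_self_iff.mpr hz
  have hPa : (adjoint U * U) * (adjoint T * T) = adjoint T * T := by
    rw [← mul_assoc, hPT]
  have haP : (adjoint T * T) * (adjoint U * U) = adjoint T * T := by
    have h := congrArg star hPa
    simpa [star_mul, hPsa.star_eq, hasa.star_eq] using h
  have hComm_Pa : Commute (adjoint U * U) (adjoint T * T) := by
    show _ * _ = _ * _
    rw [hPa, haP]
  have hUP : U * (adjoint U * U) = U := by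
    have h0 : ((adjoint U * U) - 1) * (adjoint U * U) = 0 := by
      rw [sub_mul, one_mul, hPidem, sub_self]
    have hx : star (U * ((adjoint U * U) - 1)) * (U * ((adjoint U * U) - 1)) = 0 := by
      have hstar : star (U * ((adjoint U * U) - 1)) = ((adjoint U * U) - 1) * star U := by
        simp only [star_mul, star_sub, star_one, hPsa.star_eq]
      rw [hstar]
      have : ((adjoint U * U) - 1) * star U * (U * ((adjoint U * U) - 1))
          = ((adjoint U * U) - 1) * (star U * U) * ((adjoint U * U) - 1) := by
        simp only [mul_assoc]
      rw [this, star_eq_adjoint, h0, zero_mul]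
    have h2 := (CStarRing.star_mul_self_eq_zero_iff _).mp hx
    have h3 : U * (adjoint U * U) - U = 0 := by
      have := h2
      rw [mul_sub, mul_one] at this
      exact this
    rw [← sub_eq_zero]; exact h3
  have hPU : (adjoint U * U) * adjoint U = adjoint U := by
    have h := congrArg star hUP
    simpa [star_mul, hPsa.star_eq, star_eq_adjoint] using h
  have hbUaU : T * adjoint T = U * (adjoint T * T) * adjoint U := by
    rw [← hRR]
    conv_lhs => rw [hTU]
    simp only [← star_eq_adjoint, star_mul, hRsa.star_eq, mul_assoc]
  -- powOp as cfc of adjoint T * T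
  have hpow : ∀ γ : ℝ, 0 < γ →
      powOp (absOp T) γ = cfc (fun x : ℝ => x ^ (γ/2)) (adjoint T * T) := by
    intro γ hγ
    have hcont : Continuous fun x : ℝ => x ^ γ :=
      continuous_iff_continuousAt.mpr fun x => Real.continuousAt_rpow_const x γ (Or.inr hγ.le)
    simp only [powOp, absOp]
    rw [← cfc_comp (fun x : ℝ => x ^ γ) Real.sqrt (adjoint T * T) hasa
      hcont.continuousOn Real.continuous_sqrt.continuousOn]
    apply cfc_congr
    intro x hx
    have hx0 : 0 ≤ x := spectrum_nonneg_of_nonneg ha hx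
    show Real.sqrt x ^ γ = x ^ (γ/2)
    rw [Real.sqrt_eq_rpow, ← Real.rpow_mul hx0, show (1:ℝ)/2*γ = γ/2 from by ring]
  -- conjugation identity
  have hconj : ∀ γ : ℝ, 0 < γ →
      U * powOp (absOp T) γ * adjoint U
        = cfc (fun x : ℝ => x ^ (γ/2)) (T * adjoint T) := by
    intro γ hγ
    have hγ2 : (0:ℝ) < γ/2 := by positivity
    have hcont : Continuous fun x : ℝ => x ^ (γ/2) :=
      continuous_iff_continuousAt.mpr fun x => Real.continuousAt_rpow_const x _ (Or.inr hγ2.le)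
    have hf0 : (fun x : ℝ => x ^ (γ/2)) (0:ℝ) = 0 := Real.zero_rpow hγ2.ne'
    have key := my_conj_cfcₙ U (adjoint T * T) ha
      (by rw [star_eq_adjoint]; exact hPa) (by rw [star_eq_adjoint]; exact haP)
      (by rw [star_eq_adjoint]; exact hUP) _ hcont hf0
    rw [star_eq_adjoint] at key
    rw [← hbUaU] at key
    rw [cfcₙ_eq_cfc (hf := hcont.continuousOn) (hf0 := hf0),
      cfcₙ_eq_cfc (hf := hcont.continuousOn) (hf0 := hf0)] at key
    rw [hpow γ hγ, ← key]
  -- commutation chains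
  have hbR : Commute (T * adjoint T) (absOp T) := by
    simpa only [absOp] using my_commute_cfc _ _ hasa hbin.symm Real.sqrt
  have hbPow : ∀ γ : ℝ, Commute (T * adjoint T) (powOp (absOp T) γ) := fun γ => by
    simpa only [powOp] using my_commute_cfc _ _ hRsa hbR (fun x : ℝ => x ^ γ)
  have hPowCfc : ∀ γ δ : ℝ,
      Commute (powOp (absOp T) γ) (cfc (fun x : ℝ => x ^ (δ/2)) (T * adjoint T)) :=
    fun γ δ => my_commute_cfc _ _ hbsa (hbPow γ).symm _
  have hPR : Commute (adjoint U * U) (absOp T) := by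
    simpa only [absOp] using my_commute_cfc _ _ hasa hComm_Pa Real.sqrt
  have hPpow : ∀ γ : ℝ, Commute (adjoint U * U) (powOp (absOp T) γ) := fun γ => by
    simpa only [powOp] using my_commute_cfc _ _ hRsa hPR (fun x : ℝ => x ^ γ)
  constructor
  · rw [hconj α hα]
    exact (hPowCfc β α).symm
  · have key1 : cfc (fun x : ℝ => x ^ (β/2)) (T * adjoint T) * U = U * powOp (absOp T) β := by
      rw [← hconj β hβ]
      calc U * powOp (absOp T) β * adjoint U * U
          = U * (powOp (absOp T) β * (adjoint U * U)) := by simp only [mul_assoc]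
        _ = U * ((adjoint U * U) * powOp (absOp T) β) := by rw [(hPpow β).symm.eq]
        _ = U * (adjoint U * U) * powOp (absOp T) β := by simp only [mul_assoc]
        _ = U * powOp (absOp T) β := by rw [hUP]
    have key2 : adjoint U * cfc (fun x : ℝ => x ^ (β/2)) (T * adjoint T)
        = powOp (absOp T) β * adjoint U := by
      rw [← hconj β hβ]
      calc adjoint U * (U * powOp (absOp T) β * adjoint U)
          = (adjoint U * U) * powOp (absOp T) β * adjoint U := by simp only [mul_assoc]
        _ = powOp (absOp T) β * ((adjoint U * U) * adjoint U) := by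
            rw [(hPpow β).eq, mul_assoc]
        _ = powOp (absOp T) β * adjoint U := by rw [hPU]
    show _ * _ = _ * _
    calc (adjoint U * powOp (absOp T) α * U) * powOp (absOp T) β
        = adjoint U * powOp (absOp T) α * (cfc (fun x : ℝ => x ^ (β/2)) (T * adjoint T) * U) := by
          rw [key1]; simp only [mul_assoc]
      _ = adjoint U * (powOp (absOp T) α * cfc (fun x : ℝ => x ^ (β/2)) (T * adjoint T)) * U := by
          simp only [mul_assoc]
      _ = adjoint U * (cfc (fun x : ℝ => x ^ (β/2)) (T * adjoint T) * powOp (absOp T) α) * U := by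
          rw [(hPowCfc α β).eq]
      _ = (adjoint U * cfc (fun x : ℝ => x ^ (β/2)) (T * adjoint T)) * (powOp (absOp T) α * U) := by
          simp only [mul_assoc]
      _ = powOp (absOp T) β * adjoint U * (powOp (absOp T) α * U) := by rw [key2]
      _ = powOp (absOp T) β * (adjoint U * powOp (absOp T) α * U) := by simp only [mul_assoc]
end

section
/- Let T be a binormal bounded operator on a complex Hilbert space H with polar decomposition T = U|T|, and for real α, β > 0 set T_{α,β} = |T|^α U |T|^β. Then |T_{α,β}| = (U^*|T|^α U)·|T|^β = |T|^β·(U^*|T|^α U), and |T_{α,β}^*| = |T|^α·|T^*|^β = |T^*|^β·|T|^α. -/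
open ContinuousLinearMap
set_option maxHeartbeats 2000000

variable {H : Type*} [NormedAddCommGroup H] [InnerProductSpace ℂ H] [CompleteSpace H]

namespace AluthgeAux

open Polynomial

lemma my_sqrt_mul_self (M : H →L[ℂ] H) (hM : 0 ≤ M) :
    cfc Real.sqrt M * cfc Real.sqrt M = M := by
  have hsa : IsSelfAdjoint M := hM.isSelfAdjoint
  rw [← cfc_mul Real.sqrt Real.sqrt M]
  calc cfc (fun x => Real.sqrt x * Real.sqrt x) M
      = cfc (fun x : ℝ => x) M := by
        apply cfc_congr
        intro x hx
        exact Real.mul_self_sqrt (spectrum_nonneg_of_nonneg hM hx)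
    _ = M := cfc_id' ℝ M

lemma my_sqrt_unique {x M : H →L[ℂ] H} (hx : 0 ≤ x) (h : x * x = M) :
    cfc Real.sqrt M = x := by
  subst h
  have hsa : IsSelfAdjoint x := hx.isSelfAdjoint
  have h1 : x * x = cfc (fun t : ℝ => t * t) x := by
    rw [cfc_mul (fun t : ℝ => t) (fun t : ℝ => t) x, cfc_id' ℝ x]
  rw [h1, ← cfc_comp Real.sqrt (fun t : ℝ => t * t) x]
  calc cfc (Real.sqrt ∘ fun t : ℝ => t * t) x
      = cfc (fun t : ℝ => t) x := by
        apply cfc_congr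
        intro t ht
        exact Real.sqrt_mul_self (spectrum_nonneg_of_nonneg hx ht)
    _ = x := cfc_id' ℝ x

lemma exists_poly_near (f : ℝ → ℝ) (hf : Continuous f) (hf0 : f 0 = 0)
    (M ε : ℝ) (hM : 0 ≤ M) (hε : 0 < ε) :
    ∃ q : ℝ[X], q.coeff 0 = 0 ∧ ∀ x ∈ Set.Icc (0:ℝ) M, |f x - q.eval x| ≤ ε := by
  obtain ⟨p, hp⟩ := exists_polynomial_near_of_continuousOn 0 M f
    hf.continuousOn (ε/2) (by positivity)
  refine ⟨p - C (p.eval 0), by simp [Polynomial.coeff_zero_eq_eval_zero], fun x hx => ?_⟩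
  have h0 : |p.eval 0| < ε/2 := by
    have := hp 0 (by constructor <;> simp [hM])
    simpa [hf0] using this
  have hx' := hp x hx
  have : f x - (p - C (p.eval 0)).eval x = -(p.eval x - f x) + p.eval 0 := by
    simp; ring
  rw [this]
  calc |(-(p.eval x - f x)) + p.eval 0| ≤ |(-(p.eval x - f x))| + |p.eval 0| := abs_add_le _ _
    _ ≤ ε/2 + ε/2 := by
        rw [abs_neg]
        exact add_le_add hx'.le h0.le
    _ = ε := by ring

lemma norm_cfc_sub_aeval (a : H →L[ℂ] H) (ha : 0 ≤ a) (f : ℝ → ℝ) (hf : Continuous f)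
    {q : ℝ[X]} {M ε : ℝ} [Nontrivial H] (hM : ‖a‖ ≤ M) (hε : 0 ≤ ε)
    (hq : ∀ x ∈ Set.Icc (0:ℝ) M, |f x - q.eval x| ≤ ε) :
    ‖cfc f a - aeval a q‖ ≤ ε := by
  have hsa : IsSelfAdjoint a := ha.isSelfAdjoint
  rw [← cfc_polynomial q a, ← cfc_sub _ _ a]
  refine norm_cfc_le hε fun x hx => ?_
  have h1 : 0 ≤ x := spectrum_nonneg_of_nonneg ha hx
  have h2 : x ≤ M := by
    have := spectrum.norm_le_norm_of_mem hx
    rw [Real.norm_eq_abs] at this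
    linarith [le_abs_self x]
  simpa [Real.norm_eq_abs] using hq x ⟨h1, h2⟩

omit [CompleteSpace H] in
lemma eq_of_forall_norm_le {x : H →L[ℂ] H} (h : ∀ ε : ℝ, 0 < ε → ‖x‖ ≤ ε) : x = 0 := by
  rw [← norm_le_zero_iff]
  refine le_of_forall_pos_le_add fun ε hε => ?_
  simpa using h ε hε

omit [CompleteSpace H] in
lemma eq_of_forall_norm_le' {x : H →L[ℂ] H} (c : ℝ) (h : ∀ ε : ℝ, 0 < ε → ‖x‖ ≤ c * ε) :
    x = 0 := by
  refine eq_of_forall_norm_le fun ε hε => ?_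
  rcases le_or_gt c 0 with hc | hc
  · calc ‖x‖ ≤ c * 1 := h 1 one_pos
      _ ≤ ε := by nlinarith
  · calc ‖x‖ ≤ c * (ε / c) := h (ε / c) (by positivity)
      _ = ε := by field_simp

lemma left_fix [Nontrivial H] (V a : H →L[ℂ] H) (ha : 0 ≤ a) (hV : V * a = a)
    (f : ℝ → ℝ) (hf : Continuous f) (hf0 : f 0 = 0) : V * cfc f a = cfc f a := by
  rw [← sub_eq_zero]
  refine eq_of_forall_norm_le' (‖V‖ + 1) fun ε hε => ?_
  obtain ⟨q, hq0, hq⟩ := exists_poly_near f hf hf0 ‖a‖ ε (norm_nonneg a) hε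
  obtain ⟨r, rfl⟩ := (Polynomial.X_dvd_iff).mpr hq0
  have hVq : V * aeval a (X * r) = aeval a (X * r) := by
    rw [map_mul, aeval_X, ← mul_assoc, hV]
  have hn : ‖cfc f a - aeval a (X*r)‖ ≤ ε := norm_cfc_sub_aeval a ha f hf le_rfl hε.le hq
  have hsplit : V * cfc f a - cfc f a
      = V * (cfc f a - aeval a (X*r)) + (aeval a (X*r) - cfc f a) := by
    rw [mul_sub, hVq]; abel
  rw [hsplit]
  calc ‖V * (cfc f a - aeval a (X*r)) + (aeval a (X*r) - cfc f a)‖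
      ≤ ‖V * (cfc f a - aeval a (X*r))‖ + ‖aeval a (X*r) - cfc f a‖ := norm_add_le _ _
    _ ≤ ‖V‖ * ‖cfc f a - aeval a (X*r)‖ + ‖cfc f a - aeval a (X*r)‖ := by
        rw [norm_sub_rev (aeval a (X*r))]
        exact add_le_add (norm_mul_le _ _) le_rfl
    _ ≤ ‖V‖ * ε + ε := by
        have := mul_le_mul_of_nonneg_left hn (norm_nonneg V)
        exact add_le_add this hn
    _ = (‖V‖ + 1) * ε := by ring

lemma right_fix [Nontrivial H] (V a : H →L[ℂ] H) (ha : 0 ≤ a) (hV : a * V = a)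
    (f : ℝ → ℝ) (hf : Continuous f) (hf0 : f 0 = 0) : cfc f a * V = cfc f a := by
  rw [← sub_eq_zero]
  refine eq_of_forall_norm_le' (‖V‖ + 1) fun ε hε => ?_
  obtain ⟨q, hq0, hq⟩ := exists_poly_near f hf hf0 ‖a‖ ε (norm_nonneg a) hε
  obtain ⟨r, rfl⟩ := (Polynomial.X_dvd_iff).mpr hq0
  have hVq : aeval a (X * r) * V = aeval a (X * r) := by
    rw [mul_comm X r, map_mul, aeval_X, mul_assoc, hV]
  have hn : ‖cfc f a - aeval a (X*r)‖ ≤ ε := norm_cfc_sub_aeval a ha f hf le_rfl hε.le hq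
  have hsplit : cfc f a * V - cfc f a
      = (cfc f a - aeval a (X*r)) * V + (aeval a (X*r) - cfc f a) := by
    rw [sub_mul, hVq]; abel
  rw [hsplit]
  calc ‖(cfc f a - aeval a (X*r)) * V + (aeval a (X*r) - cfc f a)‖
      ≤ ‖(cfc f a - aeval a (X*r)) * V‖ + ‖aeval a (X*r) - cfc f a‖ := norm_add_le _ _
    _ ≤ ‖cfc f a - aeval a (X*r)‖ * ‖V‖ + ‖cfc f a - aeval a (X*r)‖ := by
        rw [norm_sub_rev (aeval a (X*r))]
        exact add_le_add (norm_mul_le _ _) le_rfl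
    _ ≤ ε * ‖V‖ + ε := by
        have := mul_le_mul_of_nonneg_right hn (norm_nonneg V)
        exact add_le_add this hn
    _ = (‖V‖ + 1) * ε := by ring

lemma commute_cfc [Nontrivial H] (a c : H →L[ℂ] H) (ha : 0 ≤ a) (hc : Commute a c)
    (f : ℝ → ℝ) (hf : Continuous f) (hf0 : f 0 = 0) : Commute (cfc f a) c := by
  have key : cfc f a * c - c * cfc f a = 0 := by
    refine eq_of_forall_norm_le' (2 * ‖c‖) fun ε hε => ?_
    obtain ⟨q, hq0, hq⟩ := exists_poly_near f hf hf0 ‖a‖ ε (norm_nonneg a) hε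
    have hcomm : Commute (aeval a q) c := by
      clear hq0 hq
      induction q using Polynomial.induction_on' with
      | add p r hp hr => simpa [map_add] using hp.add_left hr
      | monomial n t =>
          rw [aeval_monomial]
          exact ((Algebra.commute_algebraMap_left t c)).mul_left (hc.pow_left n)
    have hn : ‖cfc f a - aeval a q‖ ≤ ε := norm_cfc_sub_aeval a ha f hf le_rfl hε.le hq
    have hsplit : cfc f a * c - c * cfc f a
        = (cfc f a - aeval a q) * c + c * (aeval a q - cfc f a) := by
      rw [sub_mul, mul_sub, hcomm.eq]; abel
    rw [hsplit]
    calc ‖(cfc f a - aeval a q) * c + c * (aeval a q - cfc f a)‖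
        ≤ ‖(cfc f a - aeval a q) * c‖ + ‖c * (aeval a q - cfc f a)‖ := norm_add_le _ _
      _ ≤ ‖cfc f a - aeval a q‖ * ‖c‖ + ‖c‖ * ‖aeval a q - cfc f a‖ :=
          add_le_add (norm_mul_le _ _) (norm_mul_le _ _)
      _ = ‖cfc f a - aeval a q‖ * ‖c‖ + ‖c‖ * ‖cfc f a - aeval a q‖ := by
          rw [norm_sub_rev (aeval a q)]
      _ ≤ ε * ‖c‖ + ‖c‖ * ε := by
          have h1 := mul_le_mul_of_nonneg_right hn (norm_nonneg c)
          have h2 := mul_le_mul_of_nonneg_left hn (norm_nonneg c)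
          exact add_le_add h1 h2
      _ = 2 * ‖c‖ * ε := by ring
  exact sub_eq_zero.mp key

lemma conj_nonneg (u a : H →L[ℂ] H) (ha : 0 ≤ a) : 0 ≤ u * a * adjoint u := by
  have h2 := my_sqrt_mul_self a ha
  have hs : IsSelfAdjoint (cfc Real.sqrt a) := cfc_predicate Real.sqrt a
  set s := cfc Real.sqrt a with hsdef
  have key : u * a * adjoint u = (u * s) * star (u * s) := by
    rw [star_mul, hs.star_eq, star_eq_adjoint, ← h2]
    simp [mul_assoc]
  rw [key]
  exact mul_star_self_nonneg _

lemma conj_pow (u a : H →L[ℂ] H) (hap : a * (adjoint u * u) = a) :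
    ∀ n : ℕ, (u * a * adjoint u) ^ (n+1) = u * a ^ (n+1) * adjoint u := by
  intro n
  induction n with
  | zero => simp [pow_one]
  | succ n ih =>
      calc (u * a * adjoint u) ^ (n+2)
          = (u * a * adjoint u) * (u * a * adjoint u) ^ (n+1) := by rw [pow_succ']
        _ = (u * a * adjoint u) * (u * a ^ (n+1) * adjoint u) := by rw [ih]
        _ = u * ((a * (adjoint u * u)) * a^(n+1)) * adjoint u := by simp only [mul_assoc]
        _ = u * (a * a^(n+1)) * adjoint u := by rw [hap]
        _ = u * a ^ (n+2) * adjoint u := by rw [← pow_succ']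

lemma conj_aeval (u a : H →L[ℂ] H) (hap : a * (adjoint u * u) = a) (r : ℝ[X]) :
    u * (a * aeval a r) * adjoint u = (u * a * adjoint u) * aeval (u * a * adjoint u) r := by
  induction r using Polynomial.induction_on' with
  | add p q hp hq => rw [map_add, map_add, mul_add, mul_add, mul_add, add_mul, hp, hq]
  | monomial n t =>
      rw [aeval_monomial, aeval_monomial, Algebra.algebraMap_eq_smul_one]
      simp only [smul_mul_assoc, one_mul, mul_smul_comm, smul_mul_assoc]
      rw [← pow_succ', ← pow_succ', conj_pow u a hap n]

lemma conj_cfc [Nontrivial H] (u a : H →L[ℂ] H) (ha : 0 ≤ a)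
    (hap : a * (adjoint u * u) = a) (f : ℝ → ℝ) (hf : Continuous f) (hf0 : f 0 = 0) :
    cfc f (u * a * adjoint u) = u * cfc f a * adjoint u := by
  have hb : 0 ≤ u * a * adjoint u := conj_nonneg u a ha
  rw [eq_comm, ← sub_eq_zero]
  refine eq_of_forall_norm_le' (1 + ‖u‖ * ‖adjoint u‖) fun ε hε => ?_
  obtain ⟨q, hq0, hq⟩ := exists_poly_near f hf hf0 (max ‖a‖ ‖u * a * adjoint u‖) ε
    (le_trans (norm_nonneg a) (le_max_left _ _)) hε
  have hna : ‖cfc f a - aeval a q‖ ≤ ε :=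
    norm_cfc_sub_aeval a ha f hf (le_max_left _ _) hε.le hq
  have hnb : ‖cfc f (u * a * adjoint u) - aeval (u * a * adjoint u) q‖ ≤ ε :=
    norm_cfc_sub_aeval _ hb f hf (le_max_right _ _) hε.le hq
  obtain ⟨r, rfl⟩ := (Polynomial.X_dvd_iff).mpr hq0
  have hconj : u * aeval a (X*r) * adjoint u = aeval (u * a * adjoint u) (X*r) := by
    rw [map_mul, aeval_X, map_mul, aeval_X, ← mul_assoc]
    exact conj_aeval u a hap r
  have hsplit : u * cfc f a * adjoint u - cfc f (u * a * adjoint u)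
      = u * (cfc f a - aeval a (X*r)) * adjoint u
        + (aeval (u * a * adjoint u) (X*r) - cfc f (u * a * adjoint u)) := by
    rw [mul_sub, sub_mul, hconj]; abel
  rw [hsplit]
  have h1 : ‖u * (cfc f a - aeval a (X*r)) * adjoint u‖ ≤ ‖u‖ * ε * ‖adjoint u‖ := by
    calc ‖u * (cfc f a - aeval a (X*r)) * adjoint u‖
        ≤ ‖u * (cfc f a - aeval a (X*r))‖ * ‖adjoint u‖ := norm_mul_le _ _
      _ ≤ ‖u‖ * ‖cfc f a - aeval a (X*r)‖ * ‖adjoint u‖ := by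
          exact mul_le_mul_of_nonneg_right (norm_mul_le _ _) (norm_nonneg _)
      _ ≤ ‖u‖ * ε * ‖adjoint u‖ := by
          have := mul_le_mul_of_nonneg_left hna (norm_nonneg u)
          exact mul_le_mul_of_nonneg_right this (norm_nonneg _)
  have h2 : ‖aeval (u * a * adjoint u) (X*r) - cfc f (u * a * adjoint u)‖ ≤ ε := by
    rw [norm_sub_rev]; exact hnb
  calc ‖u * (cfc f a - aeval a (X*r)) * adjoint u
        + (aeval (u * a * adjoint u) (X*r) - cfc f (u * a * adjoint u))‖
      ≤ ‖u * (cfc f a - aeval a (X*r)) * adjoint u‖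
        + ‖aeval (u * a * adjoint u) (X*r) - cfc f (u * a * adjoint u)‖ := norm_add_le _ _
    _ ≤ ‖u‖ * ε * ‖adjoint u‖ + ε := add_le_add h1 h2
    _ = (1 + ‖u‖ * ‖adjoint u‖) * ε := by ring

lemma mul_nonneg_of_commute [Nontrivial H] (a b : H →L[ℂ] H) (ha : 0 ≤ a) (hb : 0 ≤ b)
    (hab : Commute a b) : 0 ≤ a * b := by
  have hsb : Commute (cfc Real.sqrt a) b :=
    commute_cfc a b ha hab Real.sqrt Real.continuous_sqrt Real.sqrt_zero
  have hs : IsSelfAdjoint (cfc Real.sqrt a) := cfc_predicate _ _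
  have ht : IsSelfAdjoint (cfc Real.sqrt b) := cfc_predicate _ _
  have key : a * b
      = (cfc Real.sqrt a * cfc Real.sqrt b) * star (cfc Real.sqrt a * cfc Real.sqrt b) := by
    rw [star_mul, hs.star_eq, ht.star_eq]
    calc a * b = cfc Real.sqrt a * (cfc Real.sqrt a * b) := by
          rw [← mul_assoc, my_sqrt_mul_self a ha]
      _ = cfc Real.sqrt a * (b * cfc Real.sqrt a) := by rw [hsb.eq]
      _ = cfc Real.sqrt a * ((cfc Real.sqrt b * cfc Real.sqrt b) * cfc Real.sqrt a) := by
          rw [my_sqrt_mul_self b hb]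
      _ = cfc Real.sqrt a * cfc Real.sqrt b * (cfc Real.sqrt b * cfc Real.sqrt a) := by
          simp [mul_assoc]
  rw [key]
  exact mul_star_self_nonneg _

lemma rpow_cont {γ : ℝ} (hγ : 0 < γ) : Continuous (fun x : ℝ => x ^ γ) := by
  rw [continuous_iff_continuousAt]
  exact fun x => Real.continuousAt_rpow_const x γ (Or.inr hγ.le)

lemma rpow_zero' {γ : ℝ} (hγ : 0 < γ) : (0:ℝ) ^ γ = 0 := Real.zero_rpow hγ.ne'

lemma powOp_eq (a : H →L[ℂ] H) (γ : ℝ) : powOp a γ = cfc (fun x : ℝ => x ^ γ) a := rfl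

lemma powOp_nonneg (a : H →L[ℂ] H) (ha : 0 ≤ a) (γ : ℝ) : 0 ≤ powOp a γ :=
  cfc_nonneg fun x hx => Real.rpow_nonneg (spectrum_nonneg_of_nonneg ha hx) γ

lemma powOp_sa (a : H →L[ℂ] H) (γ : ℝ) : IsSelfAdjoint (powOp a γ) :=
  cfc_predicate _ _

lemma powOp_add (a : H →L[ℂ] H) (ha : 0 ≤ a) {s t : ℝ} (hs : 0 < s) (ht : 0 < t) :
    powOp a s * powOp a t = powOp a (s+t) := by
  have hsa : IsSelfAdjoint a := ha.isSelfAdjoint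
  rw [powOp_eq, powOp_eq, powOp_eq,
    ← cfc_mul _ _ a (rpow_cont hs).continuousOn (rpow_cont ht).continuousOn]
  apply cfc_congr
  intro x hx
  exact (Real.rpow_add' (spectrum_nonneg_of_nonneg ha hx) (add_pos hs ht).ne').symm

end AluthgeAux

open AluthgeAux in
/-- For a binormal `T = U|T|` and `T_{α,β} = |T|^α U |T|^β`, one has
`|T_{α,β}| = (U^*|T|^α U)|T|^β = |T|^β (U^*|T|^α U)` and
`|T_{α,β}^*| = |T|^α |T^*|^β = |T^*|^β |T|^α`. -/
theorem absOp_aluthge_of_binormal (T U : H →L[ℂ] H)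
    (hT : IsPolarDecompositionOp T U)
    (hbin : Commute (adjoint T * T) (T * adjoint T))
    (α β : ℝ) (hα : 0 < α) (hβ : 0 < β) :
    absOp (powOp (absOp T) α * U * powOp (absOp T) β) =
        (adjoint U * powOp (absOp T) α * U) * powOp (absOp T) β ∧
    absOp (powOp (absOp T) α * U * powOp (absOp T) β) =
        powOp (absOp T) β * (adjoint U * powOp (absOp T) α * U) ∧
    absOp (adjoint (powOp (absOp T) α * U * powOp (absOp T) β)) =
        powOp (absOp T) α * powOp (absOp (adjoint T)) β ∧
    absOp (adjoint (powOp (absOp T) α * U * powOp (absOp T) β)) =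
        powOp (absOp (adjoint T)) β * powOp (absOp T) α := by
  rcases subsingleton_or_nontrivial H with hsub | hnt
  · have : Subsingleton (H →L[ℂ] H) :=
      ⟨fun f g => ContinuousLinearMap.ext fun x => Subsingleton.elim _ _⟩
    exact ⟨Subsingleton.elim _ _, Subsingleton.elim _ _,
      Subsingleton.elim _ _, Subsingleton.elim _ _⟩
  obtain ⟨hTUA, ⟨hPsa, hPidem⟩, hPrange⟩ := hT
  have habs : ∀ S : H →L[ℂ] H, absOp S = cfc Real.sqrt (adjoint S * S) := fun _ => rfl
  set A := absOp T with hAdef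
  set B := absOp (adjoint T) with hBdef
  -- basic facts about A
  have hTTsn : 0 ≤ adjoint T * T := by
    rw [← star_eq_adjoint]; exact star_mul_self_nonneg T
  have hAcfc : A = cfc Real.sqrt (adjoint T * T) := by rw [hAdef, habs]
  have hA_nonneg : 0 ≤ A := by
    rw [hAcfc]; exact cfc_nonneg fun x _ => Real.sqrt_nonneg x
  have hA_sa : IsSelfAdjoint A := hA_nonneg.isSelfAdjoint
  have hA_sq : A * A = adjoint T * T := by rw [hAcfc]; exact my_sqrt_mul_self _ hTTsn
  have hadjT : adjoint T = A * adjoint U := by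
    conv_lhs => rw [hTUA]
    rw [← star_eq_adjoint, star_mul, hA_sa.star_eq, star_eq_adjoint]
  -- partial isometry facts
  have hUP : U * (adjoint U * U) = U := by
    have h1 : star (U - U * (adjoint U * U)) * (U - U * (adjoint U * U)) = 0 := by
      have hexp : star (U - U * (adjoint U * U)) * (U - U * (adjoint U * U))
          = (adjoint U * U) - (adjoint U * U) * (adjoint U * U)
            - ((adjoint U * U) * (adjoint U * U)
              - ((adjoint U * U) * (adjoint U * U)) * (adjoint U * U)) := by
        rw [star_sub, star_mul, hPsa.star_eq, star_eq_adjoint]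
        rw [sub_mul, mul_sub, mul_sub]
        simp only [mul_assoc]
      rw [hexp, hPidem, hPidem]
      abel
    have h2 := (CStarRing.star_mul_self_eq_zero_iff _).mp h1
    have h3 := sub_eq_zero.mp h2
    exact h3.symm
  have hPU' : (adjoint U * U) * adjoint U = adjoint U := by
    have := congrArg star hUP
    rwa [star_mul, hPsa.star_eq, star_eq_adjoint] at this
  -- range projection fact
  have hPT : (adjoint U * U) * adjoint T = adjoint T := by
    rw [hPrange]
    ext y
    simp only [ContinuousLinearMap.mul_apply]
    show (rangeProjOp (adjoint T)) ((adjoint T) y) = (adjoint T) y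
    unfold rangeProjOp
    simp only [ContinuousLinearMap.coe_comp', Function.comp_apply, Submodule.subtypeL_apply]
    exact Submodule.starProjection_eq_self_iff.mpr
      (Submodule.le_topologicalClosure _ (LinearMap.mem_range_self _ y))
  have hPA2 : (adjoint U * U) * (A * A) = A * A := by
    rw [hA_sq, ← mul_assoc, hPT]
  have hA2P : (A * A) * (adjoint U * U) = A * A := by
    have := congrArg star hPA2
    rwa [star_mul, hPsa.star_eq, star_mul, hA_sa.star_eq] at this
  have hPA : (adjoint U * U) * A = A := by
    have e2 : A * (A * (adjoint U * U)) = A * A := by rw [← mul_assoc, hA2P]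
    have e3 : ((adjoint U * U) * A) * A = A * A := by rw [mul_assoc, hPA2]
    have e4 : ((adjoint U * U) * A) * (A * (adjoint U * U)) = A * A := by
      rw [mul_assoc, ← mul_assoc A A, hA2P, hPA2]
    have h1 : (A - (adjoint U * U) * A) * star (A - (adjoint U * U) * A) = 0 := by
      have hstar : star (A - (adjoint U * U) * A) = A - A * (adjoint U * U) := by
        rw [star_sub, hA_sa.star_eq, star_mul, hA_sa.star_eq, hPsa.star_eq]
      rw [hstar, sub_mul, mul_sub, mul_sub, e2, e3, e4]
      abel
    have h2 := (CStarRing.mul_star_self_eq_zero_iff _).mp h1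
    exact (sub_eq_zero.mp h2).symm
  have hAP : A * (adjoint U * U) = A := by
    have := congrArg star hPA
    rwa [star_mul, hA_sa.star_eq, hPsa.star_eq] at this
  -- basic facts about B
  have hTTs : 0 ≤ T * adjoint T := by
    rw [← star_eq_adjoint]; exact mul_star_self_nonneg T
  have hBcfc : B = cfc Real.sqrt (T * adjoint T) := by
    rw [hBdef, habs, adjoint_adjoint]
  have hB_nonneg : 0 ≤ B := by
    rw [hBcfc]; exact cfc_nonneg fun x _ => Real.sqrt_nonneg x
  have hB_sa : IsSelfAdjoint B := hB_nonneg.isSelfAdjoint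
  have hB_sq : B * B = T * adjoint T := by rw [hBcfc]; exact my_sqrt_mul_self _ hTTs
  have hUAU_sq : (U * A * adjoint U) * (U * A * adjoint U) = T * adjoint T := by
    have h1 : (U * A * adjoint U) * (U * A * adjoint U)
        = U * (A * ((adjoint U * U) * A)) * adjoint U := by
      simp only [mul_assoc]
    rw [h1, hPA]
    conv_rhs => rw [hadjT]
    conv_rhs => rw [hTUA]
    simp only [mul_assoc]
  have hBeq : B = U * A * adjoint U := by
    rw [hBcfc]
    exact my_sqrt_unique (conj_nonneg U A hA_nonneg) hUAU_sq
  -- commutation of A and B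
  have hABcomm : Commute A B := by
    have h1 : Commute (cfc Real.sqrt (adjoint T * T)) (T * adjoint T) :=
      commute_cfc (adjoint T * T) (T * adjoint T) hTTsn hbin Real.sqrt
        Real.continuous_sqrt Real.sqrt_zero
    rw [← hAcfc] at h1
    have h2 : Commute (cfc Real.sqrt (T * adjoint T)) A :=
      commute_cfc (T * adjoint T) A hTTs h1.symm Real.sqrt
        Real.continuous_sqrt Real.sqrt_zero
    rw [← hBcfc] at h2
    exact h2.symm
  -- powOp level lemmas
  have hPApow : ∀ γ : ℝ, 0 < γ → (adjoint U * U) * powOp A γ = powOp A γ := by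
    intro γ hγ
    rw [powOp_eq]
    exact left_fix _ _ hA_nonneg hPA _ (rpow_cont hγ) (rpow_zero' hγ)
  have hAPpow : ∀ γ : ℝ, 0 < γ → powOp A γ * (adjoint U * U) = powOp A γ := by
    intro γ hγ
    rw [powOp_eq]
    exact right_fix _ _ hA_nonneg hAP _ (rpow_cont hγ) (rpow_zero' hγ)
  have hBconj : ∀ γ : ℝ, 0 < γ → powOp B γ = U * powOp A γ * adjoint U := by
    intro γ hγ
    rw [hBeq, powOp_eq, powOp_eq]
    exact conj_cfc U A hA_nonneg hAP _ (rpow_cont hγ) (rpow_zero' hγ)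
  have w1' : ∀ γ : ℝ, 0 < γ → U * powOp A γ = powOp B γ * U := by
    intro γ hγ
    rw [hBconj γ hγ, mul_assoc, mul_assoc, hAPpow γ hγ]
  have w1 : ∀ (γ : ℝ), 0 < γ → ∀ W : H →L[ℂ] H,
      U * (powOp A γ * W) = powOp B γ * (U * W) := by
    intro γ hγ W
    rw [← mul_assoc, w1' γ hγ, mul_assoc]
  have w2' : ∀ γ : ℝ, 0 < γ → powOp A γ * adjoint U = adjoint U * powOp B γ := by
    intro γ hγ
    have := congrArg star (w1' γ hγ)
    rwa [star_mul, star_mul, (powOp_sa A γ).star_eq, (powOp_sa B γ).star_eq,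
      star_eq_adjoint] at this
  have w2 : ∀ (γ : ℝ), 0 < γ → ∀ W : H →L[ℂ] H,
      powOp A γ * (adjoint U * W) = adjoint U * (powOp B γ * W) := by
    intro γ hγ W
    rw [← mul_assoc, w2' γ hγ, mul_assoc]
  have hABpow : ∀ γ δ : ℝ, 0 < γ → 0 < δ → Commute (powOp A γ) (powOp B δ) := by
    intro γ δ hγ hδ
    have c1 : Commute (powOp B δ) A := by
      rw [powOp_eq]
      exact commute_cfc B A hB_nonneg hABcomm.symm _ (rpow_cont hδ) (rpow_zero' hδ)
    rw [powOp_eq]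
    exact commute_cfc A _ hA_nonneg c1.symm _ (rpow_cont hγ) (rpow_zero' hγ)
  have w3' : ∀ γ δ : ℝ, 0 < γ → 0 < δ →
      powOp A γ * powOp B δ = powOp B δ * powOp A γ := fun γ δ hγ hδ =>
    (hABpow γ δ hγ hδ).eq
  have w3 : ∀ (γ δ : ℝ), 0 < γ → 0 < δ → ∀ W : H →L[ℂ] H,
      powOp A γ * (powOp B δ * W) = powOp B δ * (powOp A γ * W) := by
    intro γ δ hγ hδ W
    rw [← mul_assoc, w3' γ δ hγ hδ, mul_assoc]
  have w4' : ∀ γ : ℝ, 0 < γ → powOp B γ * (U * adjoint U) = powOp B γ := by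
    intro γ hγ
    rw [hBconj γ hγ]
    simp only [mul_assoc]
    rw [← mul_assoc (adjoint U) U (adjoint U), hPU']
  have w4 : ∀ (γ : ℝ), 0 < γ → ∀ W : H →L[ℂ] H,
      powOp B γ * (U * (adjoint U * W)) = powOp B γ * W := by
    intro γ hγ W
    have h : (powOp B γ * U) * adjoint U = powOp B γ := by rw [mul_assoc, w4' γ hγ]
    rw [← mul_assoc, ← mul_assoc, h]
  have hEBl : ∀ γ : ℝ, 0 < γ → (U * adjoint U) * powOp B γ = powOp B γ := by
    intro γ hγ
    have := congrArg star (w4' γ hγ)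
    rwa [star_mul, star_mul, ← star_eq_adjoint, star_star, star_eq_adjoint,
      (powOp_sa B γ).star_eq] at this
  have w7 : ∀ (γ : ℝ), 0 < γ → ∀ W : H →L[ℂ] H,
      U * (adjoint U * (powOp B γ * W)) = powOp B γ * W := by
    intro γ hγ W
    rw [← mul_assoc, ← mul_assoc, hEBl γ hγ]
  have w5' : ∀ s t : ℝ, 0 < s → 0 < t → powOp A s * powOp A t = powOp A (s+t) :=
    fun s t hs ht => powOp_add A hA_nonneg hs ht
  have w5 : ∀ (s t : ℝ), 0 < s → 0 < t → ∀ W : H →L[ℂ] H,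
      powOp A s * (powOp A t * W) = powOp A (s+t) * W := by
    intro s t hs ht W
    rw [← mul_assoc, w5' s t hs ht]
  have w6' : ∀ s t : ℝ, 0 < s → 0 < t → powOp B s * powOp B t = powOp B (s+t) :=
    fun s t hs ht => powOp_add B hB_nonneg hs ht
  have w6 : ∀ (s t : ℝ), 0 < s → 0 < t → ∀ W : H →L[ℂ] H,
      powOp B s * (powOp B t * W) = powOp B (s+t) * W := by
    intro s t hs ht W
    rw [← mul_assoc, w6' s t hs ht]
  -- the operator S and its adjoint
  have hadjS : adjoint (powOp A α * U * powOp A β)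
      = powOp A β * (adjoint U * powOp A α) := by
    rw [← star_eq_adjoint, star_mul, star_mul, (powOp_sa A β).star_eq,
      (powOp_sa A α).star_eq, star_eq_adjoint]
  -- positivity of X = U† A^α U
  have hXpos : 0 ≤ adjoint U * powOp A α * U := by
    have h := star_mul_self_nonneg (powOp A (α/2) * U)
    have he : star (powOp A (α/2) * U) * (powOp A (α/2) * U)
        = adjoint U * powOp A α * U := by
      rw [star_mul, (powOp_sa A (α/2)).star_eq, star_eq_adjoint]
      simp only [mul_assoc]
      rw [w5 (α/2) (α/2) (by positivity) (by positivity) U, add_halves]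
    rw [← he]
    exact h
  -- X * b in canonical form
  have hXb : (adjoint U * powOp A α * U) * powOp A β
      = adjoint U * (powOp A α * (powOp B β * U)) := by
    simp only [mul_assoc]
    rw [w1' β hβ]
  -- commutation of X and b
  have hXbcomm : Commute (adjoint U * powOp A α * U) (powOp A β) := by
    show _ * _ = _ * _
    rw [hXb]
    simp only [mul_assoc]
    rw [w2 β hβ, ← w3 α β hα hβ]
  -- Goal 1
  have goal1 : absOp (powOp A α * U * powOp A β)
      = (adjoint U * powOp A α * U) * powOp A β := by
    show cfc Real.sqrt _ = _
    apply my_sqrt_unique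
    · exact mul_nonneg_of_commute _ _ hXpos (powOp_nonneg A hA_nonneg β) hXbcomm
    · rw [hadjS, hXb]
      simp only [mul_assoc]
      rw [w4 β hβ, ← w3 α β hα hβ, w5 α α hα hα, w6 β β hβ hβ]
      rw [w5 α α hα hα, w1' β hβ, w2 β hβ, ← w3 (α+α) β (by positivity) hβ,
        w6 β β hβ hβ]
  -- Goal 2
  have goal2 : absOp (powOp A α * U * powOp A β)
      = powOp A β * (adjoint U * powOp A α * U) := by
    rw [goal1, hXbcomm.eq]
  -- Goals 3 and 4
  have hSadjS : ((powOp A α * powOp B β) * (powOp A α * powOp B β))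
      = (powOp A α * U * powOp A β) * adjoint (powOp A α * U * powOp A β) := by
    rw [hadjS]
    simp only [mul_assoc]
    rw [w3 α β hα hβ, w5 α α hα hα]
    rw [w5 β β hβ hβ, w2 (β+β) (by positivity), w7 (β+β) (by positivity),
      w3 α (β+β) hα (by positivity)]
    rw [← w3 (α+α) β (by positivity) hβ, w6' β β hβ hβ, w5' α α hα hα,
      w3' (α+α) (β+β) (by positivity) (by positivity)]
  have goal3 : absOp (adjoint (powOp A α * U * powOp A β))
      = powOp A α * powOp B β := by
    show cfc Real.sqrt _ = _
    rw [adjoint_adjoint]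
    apply my_sqrt_unique
    · exact mul_nonneg_of_commute _ _ (powOp_nonneg A hA_nonneg α)
        (powOp_nonneg B hB_nonneg β) (hABpow α β hα hβ)
    · exact hSadjS
  have goal4 : absOp (adjoint (powOp A α * U * powOp A β))
      = powOp B β * powOp A α := by
    rw [goal3, w3' α β hα hβ]
  exact ⟨goal1, goal2, goal3, goal4⟩
end

section
/- Let T be a bounded operator on a complex Hilbert space H with Moore–Penrose inverse T† and polar decomposition T = U|T|. Then T† = U^*|T†| is the polar decomposition of T†; that is, U^* is a partial isometry and (U^*)^*U^* = UU^* equals the orthogonal projection onto the closure of the range of (T†)^*. -/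
open ContinuousLinearMap

variable {H : Type*} [NormedAddCommGroup H] [InnerProductSpace ℂ H] [CompleteSpace H]

/-- `X` is the Moore--Penrose inverse of `T`: the four Penrose equations hold. -/
def IsMoorePenroseInv (T X : H →L[ℂ] H) : Prop :=
  T * X * T = T ∧ X * T * X = X ∧ IsSelfAdjoint (T * X) ∧ IsSelfAdjoint (X * T)

set_option synthInstance.maxHeartbeats 1000000 in
lemma absOp_unique {T b : H →L[ℂ] H} (hb : 0 ≤ b) (hsq : b * b = adjoint T * T) :
    absOp T = b := by
  have hTT : (0 : H →L[ℂ] H) ≤ adjoint T * T := by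
    rw [← star_eq_adjoint]; exact star_mul_self_nonneg T
  have hmul : cfc Real.sqrt (adjoint T * T) * cfc Real.sqrt (adjoint T * T)
      = adjoint T * T := by
    rw [← cfc_mul Real.sqrt Real.sqrt (adjoint T * T)]
    conv_rhs => rw [← cfc_id ℝ (adjoint T * T) (IsSelfAdjoint.of_nonneg hTT)]
    exact cfc_congr fun x hx => Real.mul_self_sqrt (spectrum_nonneg_of_nonneg hTT hx)
  have hnn : (0 : H →L[ℂ] H) ≤ cfc Real.sqrt (adjoint T * T) :=
    cfc_nonneg fun x _ => Real.sqrt_nonneg x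
  have h1 : CFC.sqrt (adjoint T * T) = cfc Real.sqrt (adjoint T * T) :=
    CFC.sqrt_unique hmul hnn
  have h2 : CFC.sqrt (adjoint T * T) = b := CFC.sqrt_unique hsq hb
  rw [absOp, ← h1, h2]

open scoped InnerProductSpace

lemma rangeProjOp_apply_of_mem (S : H →L[ℂ] H) {v : H}
    (hv : v ∈ (LinearMap.range (S : H →ₗ[ℂ] H)).topologicalClosure) : rangeProjOp S v = v := by
  simpa [rangeProjOp] using Submodule.starProjection_eq_self_iff.mpr hv

lemma rangeProjOp_apply_mem (S : H →L[ℂ] H) (v : H) :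
    rangeProjOp S v ∈ (LinearMap.range (S : H →ₗ[ℂ] H)).topologicalClosure := by
  simpa [rangeProjOp] using
    (Submodule.orthogonalProjectionOnto (LinearMap.range (S : H →ₗ[ℂ] H)).topologicalClosure v).2

lemma rangeProjOp_comp (S : H →L[ℂ] H) : rangeProjOp S * S = S := by
  ext x
  rw [mul_apply_eq_comp]
  exact rangeProjOp_apply_of_mem S
    (Submodule.le_topologicalClosure _ (LinearMap.mem_range_self _ x))

lemma eq_rangeProjOp {S Q : H →L[ℂ] H}
    (hmem : ∀ x, Q x ∈ (LinearMap.range (S : H →ₗ[ℂ] H)).topologicalClosure)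
    (hperp : ∀ x, ∀ w ∈ (LinearMap.range (S : H →ₗ[ℂ] H)).topologicalClosure, ⟪x - Q x, w⟫_ℂ = 0) :
    Q = rangeProjOp S := by
  ext x
  have := Submodule.eq_starProjection_of_mem_of_inner_eq_zero (hmem x) (hperp x)
  simp only [rangeProjOp, coe_comp', Function.comp_apply, Submodule.coe_subtypeL',
    Submodule.coe_subtype]
  exact this.symm

lemma mp_unique {A G₁ G₂ : H →L[ℂ] H} (h₁ : IsMoorePenroseInv A G₁)
    (h₂ : IsMoorePenroseInv A G₂) : G₁ = G₂ := by
  obtain ⟨e1, e2, e3, e4⟩ := h₁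
  obtain ⟨f1, f2, f3, f4⟩ := h₂
  have hAG : A * G₁ = A * G₂ := by
    calc A * G₁ = (A * G₂ * A) * G₁ := by rw [f1]
      _ = (A * G₂) * (A * G₁) := by noncomm_ring
      _ = star (A * G₂) * star (A * G₁) := by rw [f3.star_eq, e3.star_eq]
      _ = star ((A * G₁) * (A * G₂)) := (star_mul _ _).symm
      _ = star ((A * G₁ * A) * G₂) := by rw [show (A * G₁) * (A * G₂) = (A * G₁ * A) * G₂ by noncomm_ring]
      _ = star (A * G₂) := by rw [e1]
      _ = A * G₂ := f3.star_eq
  have hGA : G₁ * A = G₂ * A := by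
    calc G₁ * A = G₁ * (A * G₂ * A) := by rw [f1]
      _ = (G₁ * A) * (G₂ * A) := by noncomm_ring
      _ = star (G₁ * A) * star (G₂ * A) := by rw [f4.star_eq, e4.star_eq]
      _ = star ((G₂ * A) * (G₁ * A)) := (star_mul _ _).symm
      _ = star (G₂ * (A * G₁ * A)) := by rw [show (G₂ * A) * (G₁ * A) = G₂ * (A * G₁ * A) by noncomm_ring]
      _ = star (G₂ * A) := by rw [e1]
      _ = G₂ * A := f4.star_eq
  calc G₁ = G₁ * A * G₁ := e2.symm
    _ = G₂ * A * G₁ := by rw [hGA]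
    _ = G₂ * (A * G₁) := by rw [mul_assoc]
    _ = G₂ * (A * G₂) := by rw [hAG]
    _ = G₂ * A * G₂ := by rw [mul_assoc]
    _ = G₂ := f2

/-- If `T = U|T|` is the polar decomposition and `X = T†`, then
`T† = U^*|T†|` is the polar decomposition of `T†`. -/
theorem polarDecomposition_moorePenrose (T X U : H →L[ℂ] H)
    (hX : IsMoorePenroseInv T X) (hT : IsPolarDecompositionOp T U) :
    X = adjoint U * absOp X ∧ IsPartialIsometryOp (adjoint U) ∧
      U * adjoint U = rangeProjOp (adjoint X) := by
  obtain ⟨hX1, hX2, hX3, hX4⟩ := hX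
  obtain ⟨hTU, ⟨hPsa, hPidem⟩, hP⟩ := hT
  simp only [← star_eq_adjoint] at hPsa hPidem hP ⊢
  set A := absOp T with hA
  have hTT : (0 : H →L[ℂ] H) ≤ star T * T := star_mul_self_nonneg T
  have hApos : (0 : H →L[ℂ] H) ≤ A := by
    rw [hA, absOp]; exact cfc_nonneg fun x _ => Real.sqrt_nonneg x
  have hAsa : star A = A := (IsSelfAdjoint.of_nonneg hApos).star_eq
  have hA2 : A * A = star T * T := by
    rw [hA, absOp, ← cfc_mul Real.sqrt Real.sqrt (adjoint T * T), ← star_eq_adjoint]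
    conv_rhs => rw [← cfc_id ℝ (star T * T) (IsSelfAdjoint.of_nonneg hTT)]
    exact cfc_congr fun x hx => Real.mul_self_sqrt (spectrum_nonneg_of_nonneg hTT hx)
  have hadjA : adjoint A = A := by rw [← star_eq_adjoint, hAsa]
  -- P := star U * U is the projection onto the closure of the range of star T
  have hPA : (star U * U) * A = A := by
    rw [hP]
    ext x
    rw [mul_apply_eq_comp]
    apply rangeProjOp_apply_of_mem
    rw [← Submodule.orthogonal_orthogonal
      (LinearMap.range ((star T : H →L[ℂ] H) : H →ₗ[ℂ] H)).topologicalClosure]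
    rw [Submodule.mem_orthogonal]
    intro u hu
    have hu' := (Submodule.mem_orthogonal _ _).mp hu
    have hTu : T u = 0 := by
      have h0 : ∀ z : H, ⟪z, T u⟫_ℂ = 0 := by
        intro z
        have hm : (star T) z ∈ (LinearMap.range ((star T : H →L[ℂ] H) : H →ₗ[ℂ] H)).topologicalClosure :=
          Submodule.le_topologicalClosure _ (LinearMap.mem_range_self _ z)
        have := hu' _ hm
        rwa [star_eq_adjoint, adjoint_inner_left] at this
      have := h0 (T u)
      exact inner_self_eq_zero.mp this
    have hAu : A u = 0 := by
      have h0 : ⟪A u, A u⟫_ℂ = 0 := by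
        calc ⟪A u, A u⟫_ℂ = ⟪adjoint A u, A u⟫_ℂ := by rw [hadjA]
          _ = ⟪u, A (A u)⟫_ℂ := adjoint_inner_left A (A u) u
          _ = ⟪u, (A * A) u⟫_ℂ := by rw [mul_apply_eq_comp]
          _ = ⟪u, (star T) (T u)⟫_ℂ := by rw [hA2, mul_apply_eq_comp]
          _ = 0 := by rw [hTu, map_zero, inner_zero_right]
      exact inner_self_eq_zero.mp h0
    calc ⟪u, A x⟫_ℂ = ⟪adjoint A u, x⟫_ℂ := (adjoint_inner_left A x u).symm
      _ = ⟪A u, x⟫_ℂ := by rw [hadjA]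
      _ = 0 := by rw [hAu, inner_zero_left]
  have hUA : U * A = T := hTU.symm
  have hUsT : star U * T = A := by rw [← hUA, ← mul_assoc, hPA]
  have hTs : star T = A * star U := by rw [← hUA, star_mul, hAsa]
  have hPs : star (star U * U) = star U * U := hPsa.star_eq
  have hUP : U * (star U * U) = U := by
    have key : star (U * (star U * U) - U) * (U * (star U * U) - U) = 0 := by
      have expand : star (U * (star U * U) - U) * (U * (star U * U) - U)
          = (star U * U) * (star U * U) * (star U * U) - (star U * U) * (star U * U)
            - ((star U * U) * (star U * U)) + (star U * U) := by
        rw [star_sub, star_mul, hPs]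
        noncomm_ring
      rw [expand, hPidem, hPidem]
      abel
    have h0 : U * (star U * U) - U = 0 := by
      rwa [CStarRing.star_mul_self_eq_zero_iff] at key
    exact sub_eq_zero.mp h0
  -- consequences of the Penrose equations
  have hXs2 : star X = T * (X * star X) := by
    calc star X = star (X * (T * X)) := by rw [← mul_assoc, hX2]
      _ = star (T * X) * star X := star_mul _ _
      _ = (T * X) * star X := by rw [hX3.star_eq]
      _ = T * (X * star X) := mul_assoc _ _ _
  have hXa : X = star T * (star X * X) := by
    calc X = (X * T) * X := hX2.symm
      _ = star (X * T) * X := by rw [hX4.star_eq]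
      _ = (star T * star X) * X := by rw [star_mul]
      _ = star T * (star X * X) := mul_assoc _ _ _
  have hQXs : (U * star U) * star X = star X := by
    calc (U * star U) * star X
        = (U * star U) * (T * (X * star X)) := by rw [← hXs2]
      _ = U * (star U * T) * (X * star X) := by noncomm_ring
      _ = U * A * (X * star X) := by rw [hUsT]
      _ = T * (X * star X) := by rw [hUA]
      _ = star X := hXs2.symm
  have hXQ : X * (U * star U) = X := by
    calc X * (U * star U)
        = star ((U * star U) * star X) := by rw [star_mul, star_star, star_mul, star_star]
      _ = star (star X) := by rw [hQXs]
      _ = X := star_star X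
  have hPX : (star U * U) * X = X := by
    calc (star U * U) * X
        = (star U * U) * (star T * (star X * X)) := by rw [← hXa]
      _ = (star U * U) * ((A * star U) * (star X * X)) := by rw [hTs]
      _ = ((star U * U) * A) * (star U * (star X * X)) := by noncomm_ring
      _ = A * (star U * (star X * X)) := by rw [hPA]
      _ = (A * star U) * (star X * X) := by noncomm_ring
      _ = star T * (star X * X) := by rw [← hTs]
      _ = X := hXa.symm
  -- G := X * U is the Moore-Penrose inverse of A
  have hAGA : A * (X * U) * A = A := by
    calc A * (X * U) * A = (A * X) * (U * A) := by noncomm_ring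
      _ = (A * X) * T := by rw [hUA]
      _ = ((star U * T) * X) * T := by rw [hUsT]
      _ = star U * (T * X * T) := by noncomm_ring
      _ = star U * T := by rw [hX1]
      _ = A := hUsT
  have hGAG : (X * U) * A * (X * U) = X * U := by
    calc (X * U) * A * (X * U) = X * (U * A) * (X * U) := by noncomm_ring
      _ = X * T * (X * U) := by rw [hUA]
      _ = (X * T * X) * U := by noncomm_ring
      _ = X * U := by rw [hX2]
  have hAGsa : IsSelfAdjoint (A * (X * U)) := by
    have h : A * (X * U) = star U * ((T * X) * U) := by
      rw [← hUsT]; noncomm_ring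
    have h2 : star (star U * ((T * X) * U)) = star U * ((T * X) * U) := by
      calc star (star U * ((T * X) * U))
          = star ((T * X) * U) * U := by rw [star_mul, star_star]
        _ = (star U * star (T * X)) * U := by rw [star_mul]
        _ = (star U * (T * X)) * U := by rw [hX3.star_eq]
        _ = star U * ((T * X) * U) := by rw [mul_assoc]
    rw [IsSelfAdjoint, h]; exact h2
  have hGAsa : IsSelfAdjoint ((X * U) * A) := by
    have h : (X * U) * A = X * T := by rw [mul_assoc, hUA]
    rw [h]; exact hX4
  have hGmp : IsMoorePenroseInv A (X * U) := ⟨hAGA, hGAG, hAGsa, hGAsa⟩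
  have hGmp' : IsMoorePenroseInv A (star (X * U)) := by
    refine ⟨?_, ?_, ?_, ?_⟩
    · have e : A * star (X * U) * A = star (A * (X * U) * A) := by
        simp only [star_mul, star_star, hAsa, mul_assoc]
      rw [e, hAGA, hAsa]
    · have e : star (X * U) * A * star (X * U) = star ((X * U) * A * (X * U)) := by
        simp only [star_mul, star_star, hAsa, mul_assoc]
      rw [e, hGAG]
    · have h1 : star (A * star (X * U)) = (X * U) * A := by
        simp only [star_mul, star_star, hAsa]
      have h2 : A * star (X * U) = star ((X * U) * A) := by
        simp only [star_mul, hAsa]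
      rw [IsSelfAdjoint, h1, h2, hGAsa.star_eq]
    · have h1 : star (star (X * U) * A) = A * (X * U) := by
        simp only [star_mul, star_star, hAsa]
      have h2 : star (X * U) * A = star (A * (X * U)) := by
        simp only [star_mul, hAsa]
      rw [IsSelfAdjoint, h1, h2, hAGsa.star_eq]
  have hGsa : star (X * U) = X * U := mp_unique hGmp' hGmp
  have hGpos : (0 : H →L[ℂ] H) ≤ X * U := by
    have h := star_left_conjugate_nonneg hApos (X * U)
    rwa [hGsa, hGAG] at h
  have hXGU : X = (X * U) * star U := by rw [mul_assoc, hXQ]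
  have hPG : (star U * U) * (X * U) = X * U := by rw [← mul_assoc, hPX]
  have hGP : (X * U) * (star U * U) = X * U := by
    calc (X * U) * (star U * U) = star (star ((X * U) * (star U * U))) := (star_star _).symm
      _ = star (star (star U * U) * star (X * U)) := by rw [star_mul]
      _ = star ((star U * U) * (X * U)) := by rw [hPs, hGsa]
      _ = star (X * U) := by rw [hPG]
      _ = X * U := hGsa
  have hsX : star X = U * (X * U) := by
    calc star X = star ((X * U) * star U) := by rw [← hXGU]
      _ = star (star U) * star (X * U) := star_mul _ _
      _ = U * (X * U) := by rw [star_star, hGsa]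
  have hB2 : (U * (X * U) * star U) * (U * (X * U) * star U) = adjoint X * X := by
    rw [← star_eq_adjoint]
    calc (U * (X * U) * star U) * (U * (X * U) * star U)
        = U * ((X * U) * ((star U * U) * (X * U))) * star U := by noncomm_ring
      _ = U * ((X * U) * (X * U)) * star U := by rw [hPG]
      _ = (U * (X * U)) * ((X * U) * star U) := by noncomm_ring
      _ = star X * X := by rw [← hsX, ← hXGU]
  have hBpos : (0 : H →L[ℂ] H) ≤ U * (X * U) * star U := star_right_conjugate_nonneg hGpos U
  have habs : absOp X = U * (X * U) * star U := absOp_unique hBpos hB2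
  refine ⟨?_, ?_, ?_⟩
  · rw [habs]
    calc X = (X * U) * star U := hXGU
      _ = ((star U * U) * (X * U)) * star U := by rw [hPG]
      _ = star U * (U * (X * U) * star U) := by noncomm_ring
  · constructor
    · simp only [← star_eq_adjoint, star_star]
      show IsSelfAdjoint (U * star U)
      have h : star (U * star U) = U * star U := by rw [star_mul, star_star]
      exact h
    · simp only [← star_eq_adjoint, star_star]
      calc (U * star U) * (U * star U) = (U * (star U * U)) * star U := by noncomm_ring
        _ = U * star U := by rw [hUP]
  · apply eq_rangeProjOp
    · intro x
      have hAcomm : A * (X * U) = (X * U) * A := by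
        calc A * (X * U) = star (A * (X * U)) := hAGsa.star_eq.symm
          _ = star (X * U) * star A := star_mul _ _
          _ = (X * U) * A := by rw [hGsa, hAsa]
      have hA' : A = (X * U) * (A * A) := by
        calc A = A * (X * U) * A := hAGA.symm
          _ = ((X * U) * A) * A := by rw [hAcomm]
          _ = (X * U) * (A * A) := by rw [mul_assoc]
      have hUTs : U * star T = star X * (A * (A * star U)) := by
        calc U * star T = U * (A * star U) := by rw [hTs]
          _ = U * (((X * U) * (A * A)) * star U) := by rw [← hA']
          _ = (U * (X * U)) * (A * (A * star U)) := by noncomm_ring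
          _ = star X * (A * (A * star U)) := by rw [← hsX]
      rw [mul_apply_eq_comp]
      have h1 : U ((star U) x) = U ((star U * U) ((star U) x)) := by
        have h := ContinuousLinearMap.ext_iff.mp hUP ((star U) x)
        rw [mul_apply_eq_comp] at h
        exact h.symm
      have hv : (star U * U) ((star U) x)
          ∈ (LinearMap.range ((star T : H →L[ℂ] H) : H →ₗ[ℂ] H)).topologicalClosure := by
        rw [hP]; exact rangeProjOp_apply_mem _ _
      rw [h1]
      -- U maps the closure of the range of star T into the closure of the range of star X
      have h2 : (U : H → H) '' ((LinearMap.range ((star T : H →L[ℂ] H) : H →ₗ[ℂ] H) : Set H))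
          ⊆ ((LinearMap.range ((star X : H →L[ℂ] H) : H →ₗ[ℂ] H) : Set H)) := by
        rintro _ ⟨w, hw, rfl⟩
        obtain ⟨z, rfl⟩ := LinearMap.mem_range.mp hw
        refine LinearMap.mem_range.mpr ⟨(A * (A * star U)) z, ?_⟩
        calc (star X) ((A * (A * star U)) z)
            = (star X * (A * (A * star U))) z := (mul_apply_eq_comp _ _ _).symm
          _ = (U * star T) z := by rw [← hUTs]
          _ = U ((star T) z) := mul_apply_eq_comp _ _ _
      have h3 : (star U * U) ((star U) x)
          ∈ closure ((LinearMap.range ((star T : H →L[ℂ] H) : H →ₗ[ℂ] H) : Set H)) := by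
        rw [← Submodule.topologicalClosure_coe]; exact hv
      have h4 : U ((star U * U) ((star U) x))
          ∈ closure ((U : H → H) '' ((LinearMap.range ((star T : H →L[ℂ] H) : H →ₗ[ℂ] H) : Set H))) :=
        image_closure_subset_closure_image U.continuous ⟨_, h3, rfl⟩
      have h5 := closure_mono h2 h4
      rw [← Submodule.topologicalClosure_coe] at h5
      exact h5
    · intro x w hw
      have hXQx : X ((U * star U) x) = X x := by
        have h := ContinuousLinearMap.ext_iff.mp hXQ x
        rwa [mul_apply_eq_comp] at h
      have hC : ((LinearMap.range ((star X : H →L[ℂ] H) : H →ₗ[ℂ] H) : Set H))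
          ⊆ {w : H | ⟪x - (U * star U) x, w⟫_ℂ = 0} := by
        intro w' hw'
        obtain ⟨z, rfl⟩ := LinearMap.mem_range.mp hw'
        show ⟪x - (U * star U) x, (star X) z⟫_ℂ = 0
        rw [show (star X : H →L[ℂ] H) = adjoint X from star_eq_adjoint X,
          adjoint_inner_right, map_sub, hXQx, sub_self, inner_zero_left]
      have hclosed : IsClosed {w : H | ⟪x - (U * star U) x, w⟫_ℂ = 0} :=
        isClosed_eq (Continuous.inner continuous_const continuous_id) continuous_const
      have h3 : w ∈ closure ((LinearMap.range ((star X : H →L[ℂ] H) : H →ₗ[ℂ] H) : Set H)) := by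
        rw [← Submodule.topologicalClosure_coe]; exact hw
      exact closure_minimal hC hclosed h3
end
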